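/- arXiv:2007.11420 — 5 statements merged into one kernel-verified Lean document; each statement's English description precedes it below -/
import Mathlib

section
/- Let q : ℝⁿ → ℝ ∪ {+∞} be proper convex lsc. For every (x, x*) in the graph of ∂q there exists a symmetric positive semidefinite n×n matrix G with ‖G‖ ≤ 1 such that for all v* ∈ ℝⁿ, the pair ((I−G)v*, Gv*) belongs to the graph of the limiting coderivative D*(∂q)(x, x*); i.e., Gv* ∈ D*(∂q)(x, x*)((I−G)v*). -/
open RealInnerProductSpace Set Filter Topology

variable {H : Type*} [NormedAddCommGroup H] [InnerProductSpace ℝ H]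

/-- The convex (Moreau–Rockafellar) subdifferential of an `EReal`-valued function. -/
noncomputable def subdiff (q : H → EReal) (x : H) : Set H :=
  {v | ∀ y, q x + ((⟪v, y - x⟫ : ℝ) : EReal) ≤ q y}

/-- `q` is proper: finite somewhere, never `-∞`. -/
def ProperFun (q : H → EReal) : Prop := (∃ x, q x ≠ ⊤) ∧ ∀ x, q x ≠ ⊥

/-- `q` is convex: its epigraph is a convex set. -/
def ConvexFun (q : H → EReal) : Prop := Convex ℝ {p : H × ℝ | q p.1 ≤ (p.2 : EReal)}

/-- The objective of the proximal subproblem `u ↦ (γ/2)‖u‖² + ⟨f(x),u⟩ + q(x+u)`. -/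
noncomputable def proxObj (f : H → H) (q : H → EReal) (γ : ℝ) (x u : H) : EReal :=
  ((γ / 2 * ‖u‖ ^ 2 + ⟪f x, u⟫ : ℝ) : EReal) + q (x + u)

/-- The regular (Fréchet) normal cone to the graph of `Φ` at `(x, y)`. -/
def gphFrechetNormal (Φ : H → Set H) (x y : H) : Set (H × H) :=
  {p | ∀ ε > (0 : ℝ), ∃ δ > (0 : ℝ), ∀ x' y', y' ∈ Φ x' → ‖x' - x‖ < δ → ‖y' - y‖ < δ →
    ⟪p.1, x' - x⟫ + ⟪p.2, y' - y⟫ ≤ ε * (‖x' - x‖ + ‖y' - y‖)}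

/-- The limiting (Mordukhovich) normal cone to the graph of `Φ` at `(x, y)`. -/
def gphLimitingNormal (Φ : H → Set H) (x y : H) : Set (H × H) :=
  {p | ∃ (xs ys : ℕ → H) (ps : ℕ → H × H),
    (∀ k, ys k ∈ Φ (xs k) ∧ ps k ∈ gphFrechetNormal Φ (xs k) (ys k)) ∧
    Tendsto xs atTop (nhds x) ∧ Tendsto ys atTop (nhds y) ∧ Tendsto ps atTop (nhds p)}

/-- The limiting coderivative `D*Φ(x, y)`:
`u* ∈ D*Φ(x,y)(v*)` iff `(u*, -v*)` is a limiting normal to `gph Φ` at `(x, y)`. -/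
def coderiv (Φ : H → Set H) (x y vstar : H) : Set H :=
  {ustar | (ustar, -vstar) ∈ gphLimitingNormal Φ x y}

/-! ### Auxiliary development: Moreau envelope, proximal map and Minty parametrization -/

open Metric MeasureTheory

section Aux

lemma lsc_exists_min {α : Type*} [TopologicalSpace α] [T2Space α] {K : Set α} (hK : IsCompact K)
    (hne : K.Nonempty) {f : α → EReal} (hf : LowerSemicontinuous f) :
    ∃ u ∈ K, ∀ y ∈ K, f u ≤ f y := by
  set m := sInf (f '' K) with hm
  by_cases htop : ∃ c : EReal, m < c
  · obtain ⟨c₀, hc₀⟩ := htop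
    haveI : Nonempty {c : EReal // m < c} := ⟨⟨c₀, hc₀⟩⟩
    set S : {c : EReal // m < c} → Set α := fun c => K ∩ f ⁻¹' Iic c.1 with hS
    have hdir : Directed (fun x1 x2 => x1 ⊇ x2) S := by
      intro c d
      rcases le_total c.1 d.1 with h | h
      · exact ⟨c, subset_rfl, inter_subset_inter_right _ (preimage_mono (Iic_subset_Iic.2 h))⟩
      · exact ⟨d, inter_subset_inter_right _ (preimage_mono (Iic_subset_Iic.2 h)), subset_rfl⟩
    have hSne : ∀ c, (S c).Nonempty := by
      rintro ⟨c, hc⟩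
      rw [hm] at hc
      rcases sInf_lt_iff.1 hc with ⟨a, ⟨u, hu, rfl⟩, ha⟩
      exact ⟨u, hu, le_of_lt ha⟩
    have hScl : ∀ c, IsClosed (S c) := fun c =>
      (hK.isClosed.inter (hf.isClosed_preimage c.1))
    have hScp : ∀ c, IsCompact (S c) := fun c =>
      hK.inter_right (hf.isClosed_preimage c.1)
    obtain ⟨u, hu⟩ :=
      IsCompact.nonempty_iInter_of_directed_nonempty_isCompact_isClosed S hdir hSne hScp hScl
    simp only [mem_iInter, S, mem_inter_iff, mem_preimage, mem_Iic] at hu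
    refine ⟨u, (hu ⟨c₀, hc₀⟩).1, fun y hy => ?_⟩
    have h1 : f u ≤ m := le_of_forall_gt_imp_ge_of_dense (fun c hc => (hu ⟨c, hc⟩).2)
    exact h1.trans (sInf_le ⟨y, hy, rfl⟩)
  · push_neg at htop
    obtain ⟨u, hu⟩ := hne
    refine ⟨u, hu, fun y hy => ?_⟩
    have : m = ⊤ := top_le_iff.1 (htop ⊤)
    have : f y = ⊤ := top_le_iff.1 (by rw [← this]; exact sInf_le ⟨y, hy, rfl⟩)
    simp [this]

/-- Real-valued subgradient predicate. -/
def IsSub (q : H → EReal) (u v : H) : Prop :=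
  q u ≠ ⊤ ∧ ∀ (y : H) (r : ℝ), q y ≤ (r : EReal) → (q u).toReal + ⟪v, y - u⟫ ≤ r

lemma IsSub.coe_q {q : H → EReal} (hproper : ProperFun q) {u v : H} (h : IsSub q u v) :
    q u = ((q u).toReal : EReal) := (EReal.coe_toReal h.1 (hproper.2 u)).symm

lemma IsSub.le_ereal {q : H → EReal} (hproper : ProperFun q) {u v : H} (h : IsSub q u v) (y : H) :
    (((q u).toReal + ⟪v, y - u⟫ : ℝ) : EReal) ≤ q y := by
  rcases eq_or_ne (q y) ⊤ with hy | hy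
  · rw [hy]; exact le_top
  · have := h.2 y (q y).toReal (le_of_eq (EReal.coe_toReal hy (hproper.2 y)).symm)
    calc (((q u).toReal + ⟪v, y - u⟫ : ℝ) : EReal)
        ≤ ((q y).toReal : EReal) := EReal.coe_le_coe_iff.2 this
      _ = q y := EReal.coe_toReal hy (hproper.2 y)

lemma isSub_iff_mem_subdiff {q : H → EReal} (hproper : ProperFun q) (u v : H) :
    v ∈ subdiff q u ↔ IsSub q u v := by
  constructor
  · intro h
    have hqu : q u ≠ ⊤ := by
      intro htop
      obtain ⟨y₀, hy₀⟩ := hproper.1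
      have := h y₀
      rw [htop] at this
      rw [EReal.top_add_of_ne_bot (by exact_mod_cast EReal.coe_ne_bot _)] at this
      exact hy₀ (top_le_iff.1 this)
    refine ⟨hqu, fun y r hy => ?_⟩
    have h1 := (h y).trans hy
    rw [(EReal.coe_toReal hqu (hproper.2 u)).symm, ← EReal.coe_add] at h1
    exact_mod_cast h1
  · intro h y
    rw [h.coe_q hproper, ← EReal.coe_add]
    exact h.le_ereal hproper y

/-- Monotonicity of the subdifferential. -/
lemma IsSub.monotone {q : H → EReal} (hproper : ProperFun q) {u v u' v' : H}
    (h : IsSub q u v) (h' : IsSub q u' v') : 0 ≤ ⟪v - v', u - u'⟫ := by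
  have h1 := h.2 u' (q u').toReal (le_of_eq (h'.coe_q hproper))
  have h2 := h'.2 u (q u).toReal (le_of_eq (h.coe_q hproper))
  have a1 : ⟪v, u' - u⟫ = ⟪v, u'⟫ - ⟪v, u⟫ := inner_sub_right v u' u
  have a2 : ⟪v', u - u'⟫ = ⟪v', u⟫ - ⟪v', u'⟫ := inner_sub_right v' u u'
  have a3 : ⟪v - v', u - u'⟫ = ⟪v, u⟫ - ⟪v, u'⟫ - ⟪v', u⟫ + ⟪v', u'⟫ := by
    simp only [inner_sub_left, inner_sub_right]; ring
  rw [a3]; rw [a1] at h1; rw [a2] at h2; linarith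

/-- Uniqueness of the prox point. -/
lemma isSub_prox_unique {q : H → EReal} (hproper : ProperFun q) {z u u' : H}
    (h : IsSub q u (z - u)) (h' : IsSub q u' (z - u')) : u = u' := by
  have hmono := IsSub.monotone hproper h h'
  have e : ⟪z - u - (z - u'), u - u'⟫ = -‖u - u'‖ ^ 2 := by
    have : z - u - (z - u') = -(u - u') := by abel
    rw [this, inner_neg_left, real_inner_self_eq_norm_sq]
  rw [e] at hmono
  have h1 : ‖u - u'‖ ^ 2 ≤ 0 := by linarith
  have h2 : ‖u - u'‖ = 0 := by nlinarith [norm_nonneg (u - u'), sq_nonneg ‖u - u'‖]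
  rwa [norm_sub_eq_zero_iff] at h2

lemma ConvexFun.combo {q : H → EReal} (hconv : ConvexFun q) {u y : H} {a b t : ℝ}
    (hu : q u ≤ (a : EReal)) (hy : q y ≤ (b : EReal)) (ht0 : 0 ≤ t) (ht1 : t ≤ 1) :
    q ((1 - t) • u + t • y) ≤ (((1 - t) * a + t * b : ℝ) : EReal) := by
  have := hconv (show (u, a) ∈ _ from hu) (show (y, b) ∈ _ from hy)
    (by linarith : (0:ℝ) ≤ 1 - t) ht0 (by ring)
  simpa [Prod.smul_mk, Prod.mk_add_mk, smul_eq_mul] using this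

lemma exists_prox {q : H → EReal} [ProperSpace H] (hproper : ProperFun q) (hconv : ConvexFun q)
    (hlsc : LowerSemicontinuous q) {x xstar : H} (hsub : IsSub q x xstar) (z : H) :
    ∃ u, IsSub q u (z - u) := by
  classical
  set c0 := (q x).toReal with hc0
  set φ : H → EReal := fun u => q u + ((‖z - u‖ ^ 2 / 2 : ℝ) : EReal) with hφ
  have hφlsc : LowerSemicontinuous φ := by
    apply LowerSemicontinuous.add' hlsc
    · exact (Continuous.comp continuous_coe_real_ereal
        (((continuous_const.sub continuous_id).norm.pow 2).div_const 2)).lowerSemicontinuous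
    · intro u
      exact EReal.continuousAt_add (Or.inr (EReal.coe_ne_bot _)) (Or.inl (hproper.2 u))
  have hmin : ∀ u, ((c0 + ⟪xstar, u - x⟫ : ℝ) : EReal) ≤ q u := hsub.le_ereal hproper
  have hφx : φ x = ((c0 + ‖z - x‖ ^ 2 / 2 : ℝ) : EReal) := by
    simp only [hφ]
    rw [hsub.coe_q hproper, ← EReal.coe_add, hc0]
  set R : ℝ := 2 * ‖xstar‖ + 2 + ‖xstar‖ * ‖z - x‖ + ‖z - x‖ ^ 2 / 2 + ‖x - z‖ with hR
  have hRpos : 0 < R := by positivity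
  have hxK : x ∈ closedBall z R := by
    rw [mem_closedBall, dist_eq_norm, hR]
    nlinarith [norm_nonneg xstar, norm_nonneg (z - x), norm_nonneg (x - z), sq_nonneg ‖z - x‖,
      mul_nonneg (norm_nonneg xstar) (norm_nonneg (z - x))]
  obtain ⟨u, huK, humin⟩ :=
    lsc_exists_min (isCompact_closedBall z R) ⟨z, mem_closedBall_self hRpos.le⟩ hφlsc
  -- global minimality
  have hglobal : ∀ y, φ u ≤ φ y := by
    intro y
    by_cases hy : y ∈ closedBall z R
    · exact humin y hy
    · have hty : R < ‖y - z‖ := by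
        rw [mem_closedBall, dist_eq_norm] at hy; linarith [not_le.1 hy]
      have h1 : φ u ≤ φ x := humin x hxK
      have h2 : ((c0 + ⟪xstar, y - x⟫ + ‖z - y‖ ^ 2 / 2 : ℝ) : EReal) ≤ φ y := by
        have := add_le_add_left (hmin y) (((‖z - y‖ ^ 2 / 2 : ℝ) : EReal))
        rw [← EReal.coe_add] at this
        convert this using 2
      have h3 : (c0 + ‖z - x‖ ^ 2 / 2 : ℝ) ≤ c0 + ⟪xstar, y - x⟫ + ‖z - y‖ ^ 2 / 2 := by
        have hCS : -(‖xstar‖ * (‖y - z‖ + ‖z - x‖)) ≤ ⟪xstar, y - x⟫ := by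
          have h4 : ‖y - x‖ ≤ ‖y - z‖ + ‖z - x‖ := norm_sub_le_norm_sub_add_norm_sub y z x
          have h5 : -(‖xstar‖ * ‖y - x‖) ≤ ⟪xstar, y - x⟫ :=
            neg_le_of_abs_le (abs_real_inner_le_norm xstar (y - x))
          nlinarith [norm_nonneg xstar]
        have hzy : ‖z - y‖ = ‖y - z‖ := norm_sub_rev z y
        rw [hzy]
        have hA : 2 * ‖xstar‖ + 2 ≤ R := by
          rw [hR]
          nlinarith [norm_nonneg (x - z), sq_nonneg ‖z - x‖,
            mul_nonneg (norm_nonneg xstar) (norm_nonneg (z - x))]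
        have htpos : (0:ℝ) ≤ ‖y - z‖ := norm_nonneg _
        have h6 : (2 * ‖xstar‖ + 2) * ‖y - z‖ ≤ ‖y - z‖ * ‖y - z‖ :=
          mul_le_mul_of_nonneg_right (hA.trans hty.le) htpos
        have h7 : ‖y - z‖ * ‖y - z‖ = ‖y - z‖ ^ 2 := (sq ‖y - z‖).symm
        have h8 : R ≤ ‖y - z‖ := hty.le
        rw [hR] at h8
        nlinarith [norm_nonneg xstar, norm_nonneg (x - z), sq_nonneg ‖z - x‖,
          mul_nonneg (norm_nonneg xstar) (norm_nonneg (z - x)),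
          mul_le_mul_of_nonneg_left h8 (norm_nonneg xstar)]
      calc φ u ≤ φ x := h1
        _ = ((c0 + ‖z - x‖ ^ 2 / 2 : ℝ) : EReal) := hφx
        _ ≤ ((c0 + ⟪xstar, y - x⟫ + ‖z - y‖ ^ 2 / 2 : ℝ) : EReal) := EReal.coe_le_coe_iff.2 h3
        _ ≤ φ y := h2
  -- q u is finite
  have hqu_ne_top : q u ≠ ⊤ := by
    intro htop
    have htopφ : φ u = ⊤ := by
      simp only [hφ, htop]
      exact EReal.top_add_of_ne_bot (EReal.coe_ne_bot _)
    have h := hglobal x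
    rw [hφx, htopφ] at h
    exact (EReal.coe_ne_top _) (top_le_iff.1 h)
  have hqu : q u = (((q u).toReal : ℝ) : EReal) := (EReal.coe_toReal hqu_ne_top (hproper.2 u)).symm
  set cu := (q u).toReal with hcu
  refine ⟨u, hqu_ne_top, fun y r hy => ?_⟩
  -- key step inequality for 0 < t ≤ 1
  have key : ∀ t : ℝ, 0 < t → t ≤ 1 → cu + ⟪z - u, y - u⟫ ≤ r + t * (‖y - u‖ ^ 2 / 2) := by
    intro t ht0 ht1
    set ut := (1 - t) • u + t • y with hut
    have hq : q ut ≤ (((1 - t) * cu + t * r : ℝ) : EReal) :=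
      hconv.combo (le_of_eq hqu) hy ht0.le ht1
    have hφle : φ u ≤ φ ut := hglobal ut
    have hφu : φ u = ((cu + ‖z - u‖ ^ 2 / 2 : ℝ) : EReal) := by
      simp only [hφ]; rw [hqu, ← EReal.coe_add]
    have hφut : φ ut ≤ (((1 - t) * cu + t * r + ‖z - ut‖ ^ 2 / 2 : ℝ) : EReal) := by
      simp only [hφ]
      calc q ut + ((‖z - ut‖ ^ 2 / 2 : ℝ) : EReal)
          ≤ (((1 - t) * cu + t * r : ℝ) : EReal) + ((‖z - ut‖ ^ 2 / 2 : ℝ) : EReal) :=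
            add_le_add_left hq _
        _ = (((1 - t) * cu + t * r + ‖z - ut‖ ^ 2 / 2 : ℝ) : EReal) := by rw [← EReal.coe_add]
    have hreal : cu + ‖z - u‖ ^ 2 / 2 ≤ (1 - t) * cu + t * r + ‖z - ut‖ ^ 2 / 2 := by
      have := (hφu ▸ hφle).trans hφut
      exact_mod_cast this
    have hnorm : ‖z - ut‖ ^ 2 = ‖z - u‖ ^ 2 - 2 * t * ⟪z - u, y - u⟫ + t ^ 2 * ‖y - u‖ ^ 2 := by
      have hid : z - ut = (z - u) - t • (y - u) := by
        simp only [hut, smul_sub, sub_smul, one_smul]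
        abel
      rw [hid, norm_sub_sq_real, real_inner_smul_right, norm_smul]
      simp [mul_pow, abs_of_pos ht0]
      ring
    rw [hnorm] at hreal
    nlinarith [ht0, sq_nonneg t]
  -- pass to the limit t → 0⁺
  refine le_of_forall_pos_le_add (fun ε hε => ?_)
  set D := ‖y - u‖ ^ 2 / 2 with hD
  have hD0 : 0 ≤ D := by positivity
  set t := min 1 (ε / (D + 1)) with ht
  have ht0 : 0 < t := lt_min one_pos (div_pos hε (by linarith))
  have ht1 : t ≤ 1 := min_le_left _ _
  have hkey := key t ht0 ht1
  have htD : t * D ≤ ε := by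
    have h1 : t ≤ ε / (D + 1) := min_le_right _ _
    have h2 : t * D ≤ (ε / (D + 1)) * D := mul_le_mul_of_nonneg_right h1 hD0
    have h3 : (ε / (D + 1)) * D ≤ ε := by
      rw [div_mul_eq_mul_div, div_le_iff₀ (by linarith)]
      nlinarith
    linarith
  linarith

lemma IsSub.prox_min {q : H → EReal} {z u : H} (h : IsSub q u (z - u)) :
    ∀ (y : H) (r : ℝ), q y ≤ (r : EReal) → (q u).toReal + ‖z - u‖ ^ 2 / 2 ≤ r + ‖z - y‖ ^ 2 / 2 := by
  intro y r hy
  have h1 := h.2 y r hy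
  have h2 : ‖z - y‖ ^ 2 = ‖z - u‖ ^ 2 - 2 * ⟪z - u, y - u⟫ + ‖y - u‖ ^ 2 := by
    have hid : z - y = (z - u) - (y - u) := by abel
    rw [hid, norm_sub_sq_real]
  nlinarith [sq_nonneg ‖y - u‖]

variable {q : H → EReal} {P : H → H}

/-- Firm nonexpansiveness. -/
lemma prox_firm (hproper : ProperFun q) (hP : ∀ z, IsSub q (P z) (z - P z)) (z z' : H) :
    ‖P z - P z'‖ ^ 2 ≤ ⟪z - z', P z - P z'⟫ := by
  have hmono := IsSub.monotone hproper (hP z) (hP z')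
  have e : ⟪(z - P z) - (z' - P z'), P z - P z'⟫
      = ⟪z - z', P z - P z'⟫ - ‖P z - P z'‖ ^ 2 := by
    have hid : (z - P z) - (z' - P z') = (z - z') - (P z - P z') := by abel
    rw [hid, inner_sub_left, real_inner_self_eq_norm_sq]
  rw [e] at hmono
  linarith

lemma prox_lip (hproper : ProperFun q) (hP : ∀ z, IsSub q (P z) (z - P z)) (z z' : H) :
    ‖P z - P z'‖ ≤ ‖z - z'‖ := by
  rcases eq_or_ne (P z) (P z') with h | h
  · simp [h]
  · have h1 := prox_firm hproper hP z z'
    have h2 : ⟪z - z', P z - P z'⟫ ≤ ‖z - z'‖ * ‖P z - P z'‖ := real_inner_le_norm _ _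
    have h3 : 0 < ‖P z - P z'‖ := norm_pos_iff.2 (sub_ne_zero.2 h)
    nlinarith

lemma gprox_lip (hproper : ProperFun q) (hP : ∀ z, IsSub q (P z) (z - P z)) (z z' : H) :
    ‖(z - P z) - (z' - P z')‖ ≤ ‖z - z'‖ := by
  have h1 := prox_firm hproper hP z z'
  have e : ‖(z - P z) - (z' - P z')‖ ^ 2
      = ‖z - z'‖ ^ 2 - 2 * ⟪z - z', P z - P z'⟫ + ‖P z - P z'‖ ^ 2 := by
    have hid : (z - P z) - (z' - P z') = (z - z') - (P z - P z') := by abel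
    rw [hid, norm_sub_sq_real]
  have h2 : ‖(z - P z) - (z' - P z')‖ ^ 2 ≤ ‖z - z'‖ ^ 2 := by nlinarith
  exact (pow_le_pow_iff_left₀ (norm_nonneg _) (norm_nonneg _) two_ne_zero).mp h2

lemma gprox_monotone (hproper : ProperFun q) (hP : ∀ z, IsSub q (P z) (z - P z)) (z z' : H) :
    0 ≤ ⟪(z - P z) - (z' - P z'), z - z'⟫ := by
  have h1 := prox_lip hproper hP z z'
  have h2 : ⟪P z - P z', z - z'⟫ ≤ ‖P z - P z'‖ * ‖z - z'‖ := real_inner_le_norm _ _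
  have e : ⟪(z - P z) - (z' - P z'), z - z'⟫ = ‖z - z'‖ ^ 2 - ⟪P z - P z', z - z'⟫ := by
    have hid : (z - P z) - (z' - P z') = (z - z') - (P z - P z') := by abel
    rw [hid, inner_sub_left, real_inner_self_eq_norm_sq]
  rw [e]
  nlinarith [norm_nonneg (z - z'), norm_nonneg (P z - P z')]

/-- The real inner product as a continuous bilinear map. -/
noncomputable def innerCLM : H →L[ℝ] H →L[ℝ] ℝ :=
  (isBoundedBilinearMap_inner (𝕜 := ℝ)).toContinuousLinearMap

@[simp] lemma innerCLM_apply (a b : H) : (innerCLM a : H →L[ℝ] ℝ) b = ⟪a, b⟫ := rfl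

/-- The Moreau envelope upper expansion. -/
lemma envelope_key (hproper : ProperFun q) (hP : ∀ z, IsSub q (P z) (z - P z)) (z z' : H) :
    (q (P z')).toReal + ‖z' - P z'‖ ^ 2 / 2
      ≤ (q (P z)).toReal + ‖z - P z‖ ^ 2 / 2 + ⟪z - P z, z' - z⟫ + ‖z' - z‖ ^ 2 / 2 := by
  have h1 := (hP z').prox_min (P z) (q (P z)).toReal (le_of_eq ((hP z).coe_q hproper))
  have h2 : ‖z' - P z‖ ^ 2 = ‖z - P z‖ ^ 2 + 2 * ⟪z - P z, z' - z⟫ + ‖z' - z‖ ^ 2 := by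
    have hid : z' - P z = (z - P z) + (z' - z) := by abel
    rw [hid, norm_add_sq_real]
  nlinarith

/-- The Moreau envelope is differentiable with gradient `z - P z`. -/
lemma envelope_hasFDerivAt (hproper : ProperFun q) (hP : ∀ z, IsSub q (P z) (z - P z)) (z : H) :
    HasFDerivAt (fun w => (q (P w)).toReal + ‖w - P w‖ ^ 2 / 2)
      (innerCLM (z - P z)) z := by
  set e : H → ℝ := fun w => (q (P w)).toReal + ‖w - P w‖ ^ 2 / 2 with he
  rw [hasFDerivAt_iff_isLittleO_nhds_zero]
  rw [Asymptotics.isLittleO_iff]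
  intro c hc
  have hball : Metric.ball (0 : H) (2 * c / 3) ∈ 𝓝 (0 : H) :=
    Metric.ball_mem_nhds _ (by positivity)
  filter_upwards [hball] with h hh
  rw [Metric.mem_ball, dist_zero_right] at hh
  have hub : e (z + h) - e z - ⟪z - P z, h⟫ ≤ ‖h‖ ^ 2 / 2 := by
    have := envelope_key hproper hP z (z + h)
    simp only [he, add_sub_cancel_left] at this ⊢
    linarith
  have hlb : -(3 / 2) * ‖h‖ ^ 2 ≤ e (z + h) - e z - ⟪z - P z, h⟫ := by
    have h1 := envelope_key hproper hP (z + h) z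
    have h2 : ⟪(z + h) - P (z + h), z - (z + h)⟫ = -⟪(z + h) - P (z + h), h⟫ := by
      rw [show z - (z + h) = -h by abel, inner_neg_right]
    rw [h2] at h1
    have h3 : ‖z - (z + h)‖ = ‖h‖ := by rw [show z - (z + h) = -h by abel, norm_neg]
    rw [h3] at h1
    have h4 : ⟪((z + h) - P (z + h)) - (z - P z), h⟫
        ≥ -‖((z + h) - P (z + h)) - (z - P z)‖ * ‖h‖ := by
      have := real_inner_le_norm (((z + h) - P (z + h)) - (z - P z)) h
      have := abs_real_inner_le_norm (((z + h) - P (z + h)) - (z - P z)) h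
      nlinarith [neg_abs_le ⟪((z + h) - P (z + h)) - (z - P z), h⟫]
    have h5 : ‖((z + h) - P (z + h)) - (z - P z)‖ ≤ ‖h‖ := by
      have := gprox_lip hproper hP (z + h) z
      simpa using this
    have h6 : ⟪((z + h) - P (z + h)) - (z - P z), h⟫ ≥ -(‖h‖ * ‖h‖) := by
      nlinarith [norm_nonneg h, norm_nonneg (((z + h) - P (z + h)) - (z - P z))]
    have h7 : ⟪(z + h) - P (z + h), h⟫
        = ⟪((z + h) - P (z + h)) - (z - P z), h⟫ + ⟪z - P z, h⟫ := by
      simp only [inner_sub_left]; ring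
    simp only [he, add_sub_cancel_left] at h1 ⊢
    nlinarith [sq_nonneg ‖h‖]
  have hcomb : |e (z + h) - e z - ⟪z - P z, h⟫| ≤ (3 / 2) * ‖h‖ ^ 2 := by
    rw [abs_le]
    constructor <;> nlinarith [sq_nonneg ‖h‖]
  calc ‖e (z + h) - e z - innerCLM (z - P z) h‖
      = |e (z + h) - e z - ⟪z - P z, h⟫| := by simp [Real.norm_eq_abs, inner_sub_left]
    _ ≤ (3 / 2) * ‖h‖ ^ 2 := hcomb
    _ ≤ c * ‖h‖ := by nlinarith [norm_nonneg h]

/-- PSD of derivatives of monotone maps. -/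
lemma hasFDerivAt_psd {g : H → H} {A : H →L[ℝ] H} {z : H} (hA : HasFDerivAt g A z)
    (hmono : ∀ w w', 0 ≤ ⟪g w - g w', w - w'⟫) (v : H) : 0 ≤ ⟪A v, v⟫ := by
  have hline : HasDerivAt (fun t : ℝ => g (z + t • v)) (A v) 0 := by
    have h1 : HasDerivAt (fun t : ℝ => z + t • v) v 0 := by
      simpa using ((hasDerivAt_id (0:ℝ)).smul_const v).const_add z
    have h2 : HasFDerivAt g A (z + (0:ℝ) • v) := by simpa using hA
    exact h2.comp_hasDerivAt 0 h1
  rw [hasDerivAt_iff_tendsto_slope] at hline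
  have hline' : Tendsto (slope (fun t : ℝ => g (z + t • v)) 0) (𝓝[>] 0) (𝓝 (A v)) :=
    hline.mono_left (nhdsWithin_mono 0 (fun t ht => ne_of_gt ht))
  have htend : Tendsto (fun t : ℝ => ⟪slope (fun s : ℝ => g (z + s • v)) 0 t, v⟫)
      (𝓝[>] 0) (𝓝 ⟪A v, v⟫) := hline'.inner tendsto_const_nhds
  refine ge_of_tendsto htend ?_
  filter_upwards [self_mem_nhdsWithin] with t ht
  have ht0 : (0:ℝ) < t := ht
  have key := hmono (z + t • v) z
  have e1 : (z + t • v) - z = t • v := by abel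
  rw [e1, real_inner_smul_right] at key
  have hinner : 0 ≤ ⟪g (z + t • v) - g z, v⟫ := nonneg_of_mul_nonneg_right key ht0
  rw [slope_def_module]
  simp only [zero_smul, add_zero, sub_zero]
  rw [real_inner_smul_left]
  positivity

/-- Fréchet normals to the graph of the subdifferential at differentiability points
of the Minty parametrization. -/
lemma frechet_of_deriv (hproper : ProperFun q) (hP : ∀ z, IsSub q (P z) (z - P z))
    {A : H →L[ℝ] H} {z₀ : H} (hA : HasFDerivAt (fun w => w - P w) A z₀)
    (hsym : ∀ a b : H, ⟪A a, b⟫ = ⟪A b, a⟫) (v : H) :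
    ((A v, -(v - A v)) : H × H) ∈ gphFrechetNormal (subdiff q) (P z₀) (z₀ - P z₀) := by
  intro ε hε
  set c : ℝ := ε / (‖v‖ + 1) with hc
  have hcpos : 0 < c := by positivity
  have hvc : ‖v‖ * c ≤ ε := by
    rw [hc]
    calc ‖v‖ * (ε / (‖v‖ + 1)) ≤ (‖v‖ + 1) * (ε / (‖v‖ + 1)) := by
          apply mul_le_mul_of_nonneg_right (by linarith) (by positivity)
      _ = ε := by field_simp
  have hlittle := hA.isLittleO
  have hsm := hlittle.def hcpos
  rw [Metric.eventually_nhds_iff] at hsm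
  obtain ⟨δ0, hδ0, hsmall⟩ := hsm
  refine ⟨δ0 / 3, by positivity, fun x' y' hy' hx'n hy'n => ?_⟩
  set z' := x' + y' with hz'
  have hsubx' : IsSub q x' y' := (isSub_iff_mem_subdiff hproper x' y').1 hy'
  have hxz' : x' = P z' := by
    refine isSub_prox_unique hproper ?_ (hP z')
    simpa [hz'] using hsubx'
  have hy'eq : y' = z' - P z' := by rw [← hxz', hz']; abel
  have hzz : z' - z₀ = (x' - P z₀) + (y' - (z₀ - P z₀)) := by
    rw [hz']; abel
  have hznorm : ‖z' - z₀‖ ≤ ‖x' - P z₀‖ + ‖y' - (z₀ - P z₀)‖ := by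
    rw [hzz]; exact norm_add_le _ _
  have hzdist : dist z' z₀ < δ0 := by
    rw [dist_eq_norm]
    calc ‖z' - z₀‖ ≤ ‖x' - P z₀‖ + ‖y' - (z₀ - P z₀)‖ := hznorm
      _ < δ0 / 3 + δ0 / 3 := add_lt_add hx'n hy'n
      _ < δ0 := by linarith
  have hE := hsmall hzdist
  set Δ : H := y' - (z₀ - P z₀) with hΔ
  set hh : H := z' - z₀ with hhd
  set E : H := Δ - A hh with hEd
  have hEe : (fun w => w - P w) z' - (fun w => w - P w) z₀ - A (z' - z₀) = E := by
    simp only [hEd, hΔ, hhd]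
    rw [← hy'eq]
  rw [hEe] at hE
  have hx'PE : x' - P z₀ = hh - Δ := by
    simp only [hhd, hΔ, hz']; abel
  have hsplit : ⟪A v, x' - P z₀⟫ + ⟪-(v - A v), Δ⟫ = ⟪A v, hh⟫ - ⟪v, Δ⟫ := by
    rw [hx'PE]
    simp only [inner_sub_right, inner_neg_left, inner_sub_left]
    ring
  have hΔAE : Δ = A hh + E := by rw [hEd]; abel
  have hvΔ : ⟪v, Δ⟫ = ⟪v, A hh⟫ + ⟪v, E⟫ := by rw [hΔAE, inner_add_right]
  have hAvh : ⟪A v, hh⟫ = ⟪v, A hh⟫ := by rw [hsym v hh, real_inner_comm]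
  have hLHS : ⟪A v, x' - P z₀⟫ + ⟪-(v - A v), Δ⟫ = -⟪v, E⟫ := by
    rw [hsplit, hvΔ, hAvh]; ring
  show ⟪A v, x' - P z₀⟫ + ⟪-(v - A v), Δ⟫ ≤ ε * (‖x' - P z₀‖ + ‖Δ‖)
  rw [hLHS]
  have hb1 : -⟪v, E⟫ ≤ ‖v‖ * ‖E‖ := by
    have := abs_real_inner_le_norm v E
    nlinarith [neg_abs_le ⟪v, E⟫]
  have hb2 : ‖v‖ * ‖E‖ ≤ ‖v‖ * (c * ‖hh‖) :=
    mul_le_mul_of_nonneg_left hE (norm_nonneg v)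
  have hb3 : ‖v‖ * (c * ‖hh‖) = (‖v‖ * c) * ‖hh‖ := by ring
  have hb4 : (‖v‖ * c) * ‖hh‖ ≤ ε * ‖hh‖ :=
    mul_le_mul_of_nonneg_right hvc (norm_nonneg hh)
  have hb5 : ε * ‖hh‖ ≤ ε * (‖x' - P z₀‖ + ‖Δ‖) :=
    mul_le_mul_of_nonneg_left hznorm hε.le
  linarith

end Aux

/-- a linear structure inside the limiting coderivative of `∂q`:
there is a symmetric PSD matrix `G`, `‖G‖ ≤ 1`, with
`((I−G)v*, Gv*) ∈ gph D*(∂q)(x, x*)` for all `v*`. -/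
theorem coderiv_subdiff_linear_structure
    {n : ℕ} (q : EuclideanSpace ℝ (Fin n) → EReal)
    (hproper : ProperFun q) (hconv : ConvexFun q) (hlsc : LowerSemicontinuous q)
    (x xstar : EuclideanSpace ℝ (Fin n)) (hx : xstar ∈ subdiff q x) :
    ∃ G : EuclideanSpace ℝ (Fin n) →L[ℝ] EuclideanSpace ℝ (Fin n),
      IsSelfAdjoint G ∧ (∀ v, 0 ≤ ⟪G v, v⟫) ∧ ‖G‖ ≤ 1 ∧
      ∀ vstar, G vstar ∈ coderiv (subdiff q) x xstar (vstar - G vstar) := by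
  classical
  have hsub0 : IsSub q x xstar := (isSub_iff_mem_subdiff hproper x xstar).1 hx
  choose P hP using fun z => exists_prox hproper hconv hlsc hsub0 z
  set zbar : EuclideanSpace ℝ (Fin n) := x + xstar with hzbar
  have hPzbar : P zbar = x := by
    refine isSub_prox_unique hproper (hP zbar) ?_
    simpa [hzbar, add_sub_cancel_left] using hsub0
  have hPlip : LipschitzWith 1 P := by
    apply LipschitzWith.of_dist_le_mul
    intro z z'
    rw [dist_eq_norm, dist_eq_norm, NNReal.coe_one, one_mul]
    exact prox_lip hproper hP z z'
  have hglip : LipschitzWith 1 (fun w => w - P w) := by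
    apply LipschitzWith.of_dist_le_mul
    intro z z'
    rw [dist_eq_norm, dist_eq_norm, NNReal.coe_one, one_mul]
    exact gprox_lip hproper hP z z'
  -- Rademacher + dense differentiability points near zbar
  have hae : ∀ᵐ w ∂(volume : Measure (EuclideanSpace ℝ (Fin n))), DifferentiableAt ℝ (fun w => w - P w) w :=
    hglip.ae_differentiableAt
  have h0 : (volume : Measure (EuclideanSpace ℝ (Fin n))) {w | ¬ DifferentiableAt ℝ (fun w => w - P w) w} = 0 := by
    simpa [ae_iff] using hae
  have hns : ∀ k : ℕ, ∃ w : EuclideanSpace ℝ (Fin n), DifferentiableAt ℝ (fun w => w - P w) w ∧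
      dist w zbar < 1 / ((k : ℝ) + 1) := by
    intro k
    by_contra hcon
    push_neg at hcon
    have hsubset : Metric.ball zbar (1 / ((k : ℝ) + 1))
        ⊆ {w : EuclideanSpace ℝ (Fin n) | ¬ DifferentiableAt ℝ (fun w => w - P w) w} := by
      intro w hw hdiff
      exact absurd (Metric.mem_ball.1 hw) (not_lt.2 (hcon w hdiff))
    have hz : (volume : Measure (EuclideanSpace ℝ (Fin n))) (Metric.ball zbar (1 / ((k : ℝ) + 1))) = 0 :=
      measure_mono_null hsubset h0
    exact absurd hz (measure_ball_pos volume zbar (by positivity)).ne'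
  choose zs hzs using hns
  set A : ℕ → (EuclideanSpace ℝ (Fin n) →L[ℝ] EuclideanSpace ℝ (Fin n)) := fun k => fderiv ℝ (fun w => w - P w) (zs k) with hAd
  have hA : ∀ k, HasFDerivAt (fun w => w - P w) (A k) (zs k) := fun k =>
    (hzs k).1.hasFDerivAt
  -- Symmetry of each A k
  have henv : ∀ w : EuclideanSpace ℝ (Fin n), HasFDerivAt (fun w => (q (P w)).toReal + ‖w - P w‖ ^ 2 / 2)
      (innerCLM (w - P w)) w := envelope_hasFDerivAt hproper hP
  have hsym : ∀ k (a b : EuclideanSpace ℝ (Fin n)), ⟪A k a, b⟫ = ⟪A k b, a⟫ := by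
    intro k a b
    have hf' : HasFDerivAt (fun w : EuclideanSpace ℝ (Fin n) => innerCLM (w - P w))
        ((innerCLM (H := EuclideanSpace ℝ (Fin n))).comp (A k)) (zs k) :=
      (innerCLM (H := EuclideanSpace ℝ (Fin n))).hasFDerivAt.comp (zs k) (hA k)
    have := second_derivative_symmetric
      (f := fun w => (q (P w)).toReal + ‖w - P w‖ ^ 2 / 2)
      (f' := fun w : EuclideanSpace ℝ (Fin n) => innerCLM (w - P w)) henv hf' a b
    simpa using this
  -- Norm bounds and PSD
  have hnorm : ∀ k, ‖A k‖ ≤ 1 := by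
    intro k
    have := (hA k).le_of_lipschitz hglip
    rwa [NNReal.coe_one] at this
  have hmono : ∀ w w' : EuclideanSpace ℝ (Fin n), 0 ≤ ⟪(fun w => w - P w) w - (fun w => w - P w) w', w - w'⟫ :=
    fun w w' => gprox_monotone hproper hP w w'
  have hpsd : ∀ k (v : EuclideanSpace ℝ (Fin n)), 0 ≤ ⟪A k v, v⟫ := fun k v => hasFDerivAt_psd (hA k) hmono v
  -- Compactness: extract a convergent subsequence of the derivatives
  have hmem : ∀ k, A k ∈ Metric.closedBall (0 : EuclideanSpace ℝ (Fin n) →L[ℝ] EuclideanSpace ℝ (Fin n)) 1 := by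
    intro k
    exact mem_closedBall_zero_iff.2 (hnorm k)
  obtain ⟨G, hGmem, φ, hφmono, hφtend⟩ :=
    (isCompact_closedBall (0 : EuclideanSpace ℝ (Fin n) →L[ℝ] EuclideanSpace ℝ (Fin n)) 1).tendsto_subseq hmem
  have happly : ∀ a : EuclideanSpace ℝ (Fin n), Tendsto (fun k => A (φ k) a) atTop (𝓝 (G a)) := fun a =>
    ((ContinuousLinearMap.apply ℝ (EuclideanSpace ℝ (Fin n)) a).continuous.tendsto G).comp hφtend
  refine ⟨G, ?_, ?_, ?_, ?_⟩
  · -- self-adjoint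
    rw [ContinuousLinearMap.isSelfAdjoint_iff_isSymmetric]
    intro a b
    have h1 : Tendsto (fun k => ⟪A (φ k) a, b⟫) atTop (𝓝 ⟪G a, b⟫) :=
      (happly a).inner tendsto_const_nhds
    have h3 : Tendsto (fun k => ⟪A (φ k) b, a⟫) atTop (𝓝 ⟪G b, a⟫) :=
      (happly b).inner tendsto_const_nhds
    have h4 : (fun k => ⟪A (φ k) a, b⟫) = fun k => ⟪A (φ k) b, a⟫ := by
      funext k; exact hsym (φ k) a b
    have h5 : ⟪G a, b⟫ = ⟪G b, a⟫ := tendsto_nhds_unique (h4 ▸ h1) h3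
    show ⟪G a, b⟫ = ⟪a, G b⟫
    rw [h5, real_inner_comm]
  · -- PSD
    intro v
    have h1 : Tendsto (fun k => ⟪A (φ k) v, v⟫) atTop (𝓝 ⟪G v, v⟫) :=
      (happly v).inner tendsto_const_nhds
    exact ge_of_tendsto h1 (Eventually.of_forall fun k => hpsd (φ k) v)
  · -- norm bound
    exact mem_closedBall_zero_iff.1 hGmem
  · -- limiting coderivative
    intro v
    have hzstend : Tendsto (fun k => zs (φ k)) atTop (𝓝 zbar) := by
      rw [tendsto_iff_dist_tendsto_zero]
      apply squeeze_zero (fun k => dist_nonneg)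
        (fun k => ((hzs (φ k)).2.le.trans ?_))
        tendsto_one_div_add_atTop_nhds_zero_nat
      have h5 : (k : ℝ) ≤ (φ k : ℝ) := by exact_mod_cast hφmono.le_apply
      apply one_div_le_one_div_of_le (by positivity)
      linarith
    refine ⟨fun k => P (zs (φ k)), fun k => zs (φ k) - P (zs (φ k)),
      fun k => (A (φ k) v, -(v - A (φ k) v)), fun k => ⟨?_, ?_⟩, ?_, ?_, ?_⟩
    · exact (isSub_iff_mem_subdiff hproper _ _).2 (hP (zs (φ k)))
    · exact frechet_of_deriv hproper hP (hA (φ k)) (hsym (φ k)) v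
    · have := (hPlip.continuous.tendsto zbar).comp hzstend
      rwa [hPzbar] at this
    · have h6 : Tendsto (fun k => zs (φ k) - P (zs (φ k))) atTop (𝓝 (zbar - P zbar)) :=
        hzstend.sub ((hPlip.continuous.tendsto zbar).comp hzstend)
      rwa [hPzbar, hzbar, add_sub_cancel_left] at h6
    · exact (Tendsto.prodMk_nhds (happly v)
        ((tendsto_const_nhds.sub (happly v)).neg))
end

section
/- Let F : ℝⁿ ⇉ ℝⁿ be semismooth* at (x̄, 0) ∈ gph F and suppose there exist δ̄ > 0 and κ > 0 such that for every (x,y) ∈ gph F with ‖(x,y) − (x̄,0)‖ ≤ δ̄ there is a pair of n×n matrices (A,B) whose rows (x_i*ᵀ, y_i*ᵀ) come from graph points (y_i*, x_i*) of D*F(x,y), with A nonsingular and ‖A^{-1}‖‖(A ⋮ B)‖_F ≤ κ. Then x̄ is an isolated solution of the inclusion 0 ∈ F(x). -/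
open RealInnerProductSpace Set Filter Topology

variable {H : Type*} [NormedAddCommGroup H] [InnerProductSpace ℝ H]

/-- The directional limiting normal cone to the graph of `Φ` at `(x, y)` in
direction `(u, v)`. -/
def gphDirLimitingNormal (Φ : H → Set H) (x y u v : H) : Set (H × H) :=
  {p | ∃ (t : ℕ → ℝ) (du dv : ℕ → H) (ps : ℕ → H × H),
    (∀ k, 0 < t k ∧ (y + t k • dv k) ∈ Φ (x + t k • du k) ∧
      ps k ∈ gphFrechetNormal Φ (x + t k • du k) (y + t k • dv k)) ∧
    Tendsto t atTop (nhds 0) ∧ Tendsto du atTop (nhds u) ∧ Tendsto dv atTop (nhds v) ∧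
    Tendsto ps atTop (nhds p)}

/-- `Φ` is semismooth* at `(x, y) ∈ gph Φ`: for all directions `(u,v)` and all
`(v*, u*)` in the graph of the directional limiting coderivative (i.e. all
`(u*, −v*)` in the directional limiting normal cone), `⟨u*, u⟩ = ⟨v*, v⟩`. -/
def SemismoothStar (Φ : H → Set H) (x y : H) : Prop :=
  ∀ u v : H, ∀ p ∈ gphDirLimitingNormal Φ x y u v, ⟪p.1, u⟫ + ⟪p.2, v⟫ = 0

/-- The Frobenius norm of the horizontal block concatenation `(A ⋮ B)`. -/
noncomputable def frobBlockNorm {n : ℕ} (A B : Matrix (Fin n) (Fin n) ℝ) : ℝ :=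
  Real.sqrt ((∑ i, ∑ j, A i j ^ 2) + ∑ i, ∑ j, B i j ^ 2)


section Helpers

lemma frechet_smul {Φ : H → Set H} {x y : H} {p : H × H} {c : ℝ} (hc : 0 < c)
    (hp : p ∈ gphFrechetNormal Φ x y) : c • p ∈ gphFrechetNormal Φ x y := by
  intro ε hε
  obtain ⟨δ, hδ, h⟩ := hp (ε / c) (by positivity)
  refine ⟨δ, hδ, fun x' y' hy hx1 hy1 => ?_⟩
  have := h x' y' hy hx1 hy1
  have h2 : (⟪(c • p).1, x' - x⟫ + ⟪(c • p).2, y' - y⟫)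
      = c * (⟪p.1, x' - x⟫ + ⟪p.2, y' - y⟫) := by
    simp [Prod.smul_fst, Prod.smul_snd, real_inner_smul_left]; ring
  rw [h2]
  calc c * (⟪p.1, x' - x⟫ + ⟪p.2, y' - y⟫) ≤ c * (ε / c * (‖x' - x‖ + ‖y' - y‖)) := by
        exact mul_le_mul_of_nonneg_left this hc.le
    _ = ε * (‖x' - x‖ + ‖y' - y‖) := by field_simp

lemma limiting_smul {Φ : H → Set H} {x y : H} {p : H × H} {c : ℝ} (hc : 0 < c)
    (hp : p ∈ gphLimitingNormal Φ x y) : c • p ∈ gphLimitingNormal Φ x y := by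
  obtain ⟨xs, ys, ps, hk, hx, hy, hps⟩ := hp
  exact ⟨xs, ys, fun k => c • ps k,
    fun k => ⟨(hk k).1, frechet_smul hc (hk k).2⟩, hx, hy, hps.const_smul c⟩

lemma limiting_approx {Φ : H → Set H} {x y : H} {p : H × H}
    (hp : p ∈ gphLimitingNormal Φ x y) {ε : ℝ} (hε : 0 < ε) :
    ∃ x' y' q, y' ∈ Φ x' ∧ q ∈ gphFrechetNormal Φ x' y' ∧
      ‖x' - x‖ < ε ∧ ‖y' - y‖ < ε ∧ ‖q - p‖ < ε := by
  obtain ⟨xs, ys, ps, hk, hx, hy, hps⟩ := hp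
  obtain ⟨N1, h1⟩ := Metric.tendsto_atTop.1 hx ε hε
  obtain ⟨N2, h2⟩ := Metric.tendsto_atTop.1 hy ε hε
  obtain ⟨N3, h3⟩ := Metric.tendsto_atTop.1 hps ε hε
  set k := max N1 (max N2 N3)
  refine ⟨xs k, ys k, ps k, (hk k).1, (hk k).2, ?_, ?_, ?_⟩
  · simpa [dist_eq_norm] using h1 k (le_max_left _ _)
  · simpa [dist_eq_norm] using h2 k (le_trans (le_max_left N2 N3) (le_max_right N1 _))
  · simpa [dist_eq_norm] using h3 k (le_trans (le_max_right N2 N3) (le_max_right N1 _))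

end Helpers

lemma row_select {n : ℕ} (A B : Matrix (Fin n) (Fin n) ℝ) (hA : IsUnit A) {κ : ℝ}
    (hκ : 0 < κ) (hbound : ‖Matrix.toEuclideanCLM (𝕜 := ℝ) A⁻¹‖ * frobBlockNorm A B ≤ κ)
    (d : EuclideanSpace ℝ (Fin n)) (hd : d ≠ 0) :
    ∃ i, (∑ j, A i j * d j) ≠ 0 ∧
      (2 * κ)⁻¹ * (Real.sqrt ((∑ j, A i j ^ 2) + ∑ j, B i j ^ 2) * ‖d‖) ≤
        |∑ j, A i j * d j| := by
  by_contra hcon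
  push_neg at hcon
  set c : ℝ := (2 * κ)⁻¹ with hc
  have hcpos : 0 < c := by positivity
  have hpt : ∀ i, (∑ j, A i j * d j) ^ 2 ≤
      c ^ 2 * (((∑ j, A i j ^ 2) + ∑ j, B i j ^ 2) * ‖d‖ ^ 2) := by
    intro i
    by_cases h0 : (∑ j, A i j * d j) = 0
    · rw [h0, zero_pow (by norm_num : 2 ≠ 0)]
      positivity
    · have h1 := hcon i h0
      have ht : (0:ℝ) ≤ (∑ j, A i j ^ 2) + ∑ j, B i j ^ 2 := by positivity
      have h2 : |∑ j, A i j * d j| ^ 2 ≤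
          (c * (Real.sqrt ((∑ j, A i j ^ 2) + ∑ j, B i j ^ 2) * ‖d‖)) ^ 2 := by
        apply pow_le_pow_left₀ (abs_nonneg _) h1.le
      rw [sq_abs] at h2
      calc (∑ j, A i j * d j) ^ 2 ≤
          (c * (Real.sqrt ((∑ j, A i j ^ 2) + ∑ j, B i j ^ 2) * ‖d‖)) ^ 2 := h2
        _ = c ^ 2 * ((Real.sqrt ((∑ j, A i j ^ 2) + ∑ j, B i j ^ 2)) ^ 2 * ‖d‖ ^ 2) := by ring
        _ = c ^ 2 * (((∑ j, A i j ^ 2) + ∑ j, B i j ^ 2) * ‖d‖ ^ 2) := by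
            rw [Real.sq_sqrt ht]
  have hsum : (∑ i, (∑ j, A i j * d j) ^ 2) ≤
      c ^ 2 * (((∑ i, ∑ j, A i j ^ 2) + ∑ i, ∑ j, B i j ^ 2) * ‖d‖ ^ 2) := by
    calc (∑ i, (∑ j, A i j * d j) ^ 2)
        ≤ ∑ i, c ^ 2 * (((∑ j, A i j ^ 2) + ∑ j, B i j ^ 2) * ‖d‖ ^ 2) :=
          Finset.sum_le_sum fun i _ => hpt i
      _ = c ^ 2 * (((∑ i, ∑ j, A i j ^ 2) + ∑ i, ∑ j, B i j ^ 2) * ‖d‖ ^ 2) := by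
          rw [← Finset.sum_add_distrib, Finset.sum_mul, Finset.mul_sum]
  set w : EuclideanSpace ℝ (Fin n) := (WithLp.equiv 2 (Fin n → ℝ)).symm (A.mulVec d) with hw
  have hwnorm : ‖w‖ ^ 2 = ∑ i, (∑ j, A i j * d j) ^ 2 := by
    rw [EuclideanSpace.norm_eq]
    rw [Real.sq_sqrt (by positivity)]
    refine Finset.sum_congr rfl fun i _ => ?_
    have : w i = ∑ j, A i j * d j := rfl
    rw [this, Real.norm_eq_abs, sq_abs]
  have hdw : d = Matrix.toEuclideanCLM (𝕜 := ℝ) A⁻¹ w := by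
    rw [hw]
    show d = WithLp.toLp 2 (Matrix.mulVec A⁻¹ (Matrix.mulVec A (WithLp.ofLp d)))
    rw [Matrix.mulVec_mulVec, Matrix.nonsing_inv_mul A ((Matrix.isUnit_iff_isUnit_det A).1 hA),
      Matrix.one_mulVec]
  have hdle : ‖d‖ ≤ ‖Matrix.toEuclideanCLM (𝕜 := ℝ) A⁻¹‖ * ‖w‖ := by
    conv_lhs => rw [hdw]
    exact ContinuousLinearMap.le_opNorm _ _
  have hfrob : frobBlockNorm A B ^ 2 = (∑ i, ∑ j, A i j ^ 2) + ∑ i, ∑ j, B i j ^ 2 := by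
    rw [frobBlockNorm, Real.sq_sqrt (by positivity)]
  have hdpos : 0 < ‖d‖ := norm_pos_iff.2 hd
  have hN : (0:ℝ) ≤ ‖Matrix.toEuclideanCLM (𝕜 := ℝ) A⁻¹‖ := norm_nonneg _
  have hF : (0:ℝ) ≤ frobBlockNorm A B := Real.sqrt_nonneg _
  have key : ‖d‖ ^ 2 ≤ ‖Matrix.toEuclideanCLM (𝕜 := ℝ) A⁻¹‖ ^ 2 *
      (c ^ 2 * (frobBlockNorm A B ^ 2 * ‖d‖ ^ 2)) := by
    have h1 : ‖d‖ ^ 2 ≤ ‖Matrix.toEuclideanCLM (𝕜 := ℝ) A⁻¹‖ ^ 2 * ‖w‖ ^ 2 := by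
      have := pow_le_pow_left₀ (norm_nonneg d) hdle 2
      calc ‖d‖^2 ≤ (‖Matrix.toEuclideanCLM (𝕜 := ℝ) A⁻¹‖ * ‖w‖)^2 := this
        _ = ‖Matrix.toEuclideanCLM (𝕜 := ℝ) A⁻¹‖ ^ 2 * ‖w‖ ^ 2 := by ring
    rw [hwnorm] at h1
    rw [hfrob]
    calc ‖d‖^2 ≤ ‖Matrix.toEuclideanCLM (𝕜 := ℝ) A⁻¹‖ ^ 2 * (∑ i, (∑ j, A i j * d j) ^ 2) := h1
      _ ≤ _ := by
          apply mul_le_mul_of_nonneg_left _ (by positivity)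
          exact hsum
  have hcκ : c * κ = 1/2 := by
    rw [hc]; field_simp
  have hNf : ‖Matrix.toEuclideanCLM (𝕜 := ℝ) A⁻¹‖ ^ 2 * frobBlockNorm A B ^ 2 ≤ κ ^ 2 := by
    have h0 := mul_le_mul hbound hbound (mul_nonneg hN hF) hκ.le
    calc ‖Matrix.toEuclideanCLM (𝕜 := ℝ) A⁻¹‖ ^ 2 * frobBlockNorm A B ^ 2
        = ‖Matrix.toEuclideanCLM (𝕜 := ℝ) A⁻¹‖ * frobBlockNorm A B *
          (‖Matrix.toEuclideanCLM (𝕜 := ℝ) A⁻¹‖ * frobBlockNorm A B) := by ring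
      _ ≤ κ * κ := h0
      _ = κ ^ 2 := by ring
  have hkey2 : ‖Matrix.toEuclideanCLM (𝕜 := ℝ) A⁻¹‖ ^ 2 *
      (c ^ 2 * (frobBlockNorm A B ^ 2 * ‖d‖ ^ 2)) =
      c ^ 2 * ‖d‖ ^ 2 * (‖Matrix.toEuclideanCLM (𝕜 := ℝ) A⁻¹‖ ^ 2 * frobBlockNorm A B ^ 2) := by
    ring
  have h8' := mul_le_mul_of_nonneg_left hNf (by positivity : (0:ℝ) ≤ c ^ 2 * ‖d‖ ^ 2)
  have h7 : c ^ 2 * κ ^ 2 = 1/4 := by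
    calc c ^ 2 * κ ^ 2 = (c * κ) ^ 2 := by ring
      _ = (1/2 : ℝ) ^ 2 := by rw [hcκ]
      _ = 1/4 := by norm_num
  have h9 : 0 < ‖d‖ ^ 2 := pow_pos hdpos 2
  have h10 : c ^ 2 * ‖d‖ ^ 2 * κ ^ 2 = (1/4) * ‖d‖ ^ 2 := by
    calc c ^ 2 * ‖d‖ ^ 2 * κ ^ 2 = (c ^ 2 * κ ^ 2) * ‖d‖ ^ 2 := by ring
      _ = (1/4) * ‖d‖ ^ 2 := by rw [h7]
  linarith [key, hkey2 ▸ key, h8', h10 ▸ h8']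


/-- if `F` is semismooth* at `(x̄, 0)` and near `(x̄, 0)` one always
finds coderivative-based matrix pairs `(A,B)` with `A` nonsingular and
`‖A⁻¹‖‖(A ⋮ B)‖_F ≤ κ`, then `x̄` is an isolated solution of `0 ∈ F(x)`. -/
theorem semismooth_star_isolated_solution
    {n : ℕ} (F : EuclideanSpace ℝ (Fin n) → Set (EuclideanSpace ℝ (Fin n)))
    (xbar : EuclideanSpace ℝ (Fin n)) (hsol : (0 : EuclideanSpace ℝ (Fin n)) ∈ F xbar)
    (hss : SemismoothStar F xbar 0)
    (δbar κ : ℝ) (hδbar : 0 < δbar) (hκ : 0 < κ)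
    (hAB : ∀ x y, y ∈ F x → Real.sqrt (‖x - xbar‖ ^ 2 + ‖y‖ ^ 2) ≤ δbar →
      ∃ A B : Matrix (Fin n) (Fin n) ℝ,
        (∀ i, (EuclideanSpace.equiv (Fin n) ℝ).symm (A i) ∈
          coderiv F x y ((EuclideanSpace.equiv (Fin n) ℝ).symm (B i))) ∧
        IsUnit A ∧
        ‖Matrix.toEuclideanCLM (𝕜 := ℝ) A⁻¹‖ * frobBlockNorm A B ≤ κ) :
    ∃ δ > (0 : ℝ), ∀ x, x ≠ xbar → ‖x - xbar‖ < δ →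
      (0 : EuclideanSpace ℝ (Fin n)) ∉ F x := by
  by_contra hcon
  push_neg at hcon
  -- a sequence of nontrivial solutions converging to xbar
  have hseq : ∀ k : ℕ, ∃ x, x ≠ xbar ∧ ‖x - xbar‖ < min δbar (1/(k+1)) ∧
      (0 : EuclideanSpace ℝ (Fin n)) ∈ F x :=
    fun k => hcon _ (lt_min hδbar (by positivity))
  choose xs hxne hxlt hxF using hseq
  have hd : ∀ k, xs k - xbar ≠ 0 := fun k => sub_ne_zero.2 (hxne k)
  have ht : ∀ k, 0 < ‖xs k - xbar‖ := fun k => norm_pos_iff.2 (hd k)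
  -- matrices at each solution
  have hAB' : ∀ k, ∃ A B : Matrix (Fin n) (Fin n) ℝ,
      (∀ i, (EuclideanSpace.equiv (Fin n) ℝ).symm (A i) ∈
        coderiv F (xs k) 0 ((EuclideanSpace.equiv (Fin n) ℝ).symm (B i))) ∧
      IsUnit A ∧
      ‖Matrix.toEuclideanCLM (𝕜 := ℝ) A⁻¹‖ * frobBlockNorm A B ≤ κ := by
    intro k
    apply hAB (xs k) 0 (hxF k)
    have h0 : Real.sqrt (‖xs k - xbar‖ ^ 2 + ‖(0 : EuclideanSpace ℝ (Fin n))‖ ^ 2)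
        = ‖xs k - xbar‖ := by
      rw [norm_zero]
      simpa using Real.sqrt_sq (norm_nonneg _)
    rw [h0]
    exact le_of_lt (lt_of_lt_of_le (hxlt k) (min_le_left _ _))
  choose A B hrow hunit hbound using hAB'
  -- row selection
  have hsel : ∀ k, ∃ i, (∑ j, A k i j * (xs k - xbar) j) ≠ 0 ∧
      (2 * κ)⁻¹ * (Real.sqrt ((∑ j, A k i j ^ 2) + ∑ j, B k i j ^ 2) * ‖xs k - xbar‖) ≤
        |∑ j, A k i j * (xs k - xbar) j| :=
    fun k => row_select (A k) (B k) (hunit k) hκ (hbound k) _ (hd k)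
  choose idx hSne hSge using hsel
  set a : ℕ → EuclideanSpace ℝ (Fin n) :=
    fun k => (EuclideanSpace.equiv (Fin n) ℝ).symm (A k (idx k)) with ha
  set b : ℕ → EuclideanSpace ℝ (Fin n) :=
    fun k => (EuclideanSpace.equiv (Fin n) ℝ).symm (B k (idx k)) with hb
  set ν : ℕ → ℝ :=
    fun k => Real.sqrt ((∑ j, A k (idx k) j ^ 2) + ∑ j, B k (idx k) j ^ 2) with hν
  have hνpos : ∀ k, 0 < ν k := by
    intro k
    apply Real.sqrt_pos.2
    rcases lt_or_ge 0 ((∑ j, A k (idx k) j ^ 2) + ∑ j, B k (idx k) j ^ 2) with h | h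
    · exact h
    · exfalso
      have h1 : (0:ℝ) ≤ ∑ j, A k (idx k) j ^ 2 := by positivity
      have h2 : (0:ℝ) ≤ ∑ j, B k (idx k) j ^ 2 := by positivity
      have hA0 : (∑ j, A k (idx k) j ^ 2) = 0 := le_antisymm (by linarith) h1
      have hz : ∀ j ∈ Finset.univ, A k (idx k) j ^ 2 = 0 :=
        (Finset.sum_eq_zero_iff_of_nonneg (fun j _ => sq_nonneg _)).1 hA0
      apply hSne k
      refine Finset.sum_eq_zero fun j _ => ?_
      have := hz j (Finset.mem_univ j)
      have hAz : A k (idx k) j = 0 := by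
        have := sq_eq_zero_iff.1 this
        exact this
      rw [hAz, zero_mul]
  -- normalized limiting normals
  set p : ℕ → (EuclideanSpace ℝ (Fin n)) × (EuclideanSpace ℝ (Fin n)) :=
    fun k => (ν k)⁻¹ • (a k, -(b k)) with hp
  have hplim : ∀ k, p k ∈ gphLimitingNormal F (xs k) 0 := by
    intro k
    have hmem : ((a k), -(b k)) ∈ gphLimitingNormal F (xs k) 0 := hrow k (idx k)
    exact limiting_smul (inv_pos.2 (hνpos k)) hmem
  -- unit directions
  set u : ℕ → EuclideanSpace ℝ (Fin n) :=
    fun k => ‖xs k - xbar‖⁻¹ • (xs k - xbar) with hu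
  have hu1 : ∀ k, ‖u k‖ = 1 := by
    intro k
    rw [hu]
    simp only [norm_smul, norm_inv, norm_norm]
    exact inv_mul_cancel₀ (ht k).ne'
  -- norm bounds on coordinates of a, b
  have hanorm : ∀ k, ‖a k‖ ≤ ν k := by
    intro k
    rw [ha, hν]
    have h1 : ‖(EuclideanSpace.equiv (Fin n) ℝ).symm (A k (idx k))‖
        = Real.sqrt (∑ j, A k (idx k) j ^ 2) := by
      rw [EuclideanSpace.norm_eq]
      congr 1
      exact Finset.sum_congr rfl fun j _ => by rw [Real.norm_eq_abs, sq_abs]; rfl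
    rw [h1]
    exact Real.sqrt_le_sqrt (le_add_of_nonneg_right (by positivity))
  have hbnorm : ∀ k, ‖b k‖ ≤ ν k := by
    intro k
    rw [hb, hν]
    have h1 : ‖(EuclideanSpace.equiv (Fin n) ℝ).symm (B k (idx k))‖
        = Real.sqrt (∑ j, B k (idx k) j ^ 2) := by
      rw [EuclideanSpace.norm_eq]
      congr 1
      exact Finset.sum_congr rfl fun j _ => by rw [Real.norm_eq_abs, sq_abs]; rfl
    rw [h1]
    exact Real.sqrt_le_sqrt (le_add_of_nonneg_left (by positivity))
  have hpnorm : ∀ k, ‖p k‖ ≤ 1 := by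
    intro k
    rw [hp]
    have h1 : ‖(ν k)⁻¹ • ((a k), -(b k))‖
        = max ‖(ν k)⁻¹ • a k‖ ‖(ν k)⁻¹ • (-(b k))‖ := by
      rw [Prod.smul_mk]
      rfl
    rw [h1]
    apply max_le
    · rw [norm_smul, norm_inv, Real.norm_eq_abs, abs_of_pos (hνpos k)]
      rw [inv_mul_le_iff₀ (hνpos k), mul_one]
      exact hanorm k
    · rw [norm_smul, norm_inv, Real.norm_eq_abs, abs_of_pos (hνpos k), norm_neg]
      rw [inv_mul_le_iff₀ (hνpos k), mul_one]
      exact hbnorm k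
  -- inner product lower bound
  have hinner : ∀ k, (2 * κ)⁻¹ ≤ |⟪(p k).1, u k⟫| := by
    intro k
    have hip : ⟪(a k), xs k - xbar⟫ = ∑ j, A k (idx k) j * (xs k - xbar) j := by
      rw [ha]
      simp only [PiLp.inner_apply, RCLike.inner_apply, conj_trivial]
      exact Finset.sum_congr rfl fun j _ => by rw [mul_comm]; rfl
    have h1 : ⟪(p k).1, u k⟫ =
        (ν k)⁻¹ * (‖xs k - xbar‖⁻¹ * (∑ j, A k (idx k) j * (xs k - xbar) j)) := by
      rw [hp, hu]
      show ⟪(ν k)⁻¹ • a k, ‖xs k - xbar‖⁻¹ • (xs k - xbar)⟫ = _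
      rw [real_inner_smul_left, real_inner_smul_right, hip]
    rw [h1, abs_mul, abs_mul, abs_inv, abs_inv, abs_of_pos (hνpos k),
      abs_of_pos (ht k)]
    have h2 := hSge k
    have hν0 : (ν k) ≠ 0 := (hνpos k).ne'
    have ht0 : ‖xs k - xbar‖ ≠ 0 := (ht k).ne'
    have h3 : (ν k)⁻¹ * (‖xs k - xbar‖⁻¹ * ((2 * κ)⁻¹ * (ν k * ‖xs k - xbar‖)))
        = (2 * κ)⁻¹ := by
      field_simp
    calc (2 * κ)⁻¹
        = (ν k)⁻¹ * (‖xs k - xbar‖⁻¹ * ((2 * κ)⁻¹ * (ν k * ‖xs k - xbar‖))) := h3.symm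
      _ ≤ (ν k)⁻¹ * (‖xs k - xbar‖⁻¹ * |∑ j, A k (idx k) j * (xs k - xbar) j|) := by
          apply mul_le_mul_of_nonneg_left _ (inv_pos.2 (hνpos k)).le
          exact mul_le_mul_of_nonneg_left h2 (inv_pos.2 (ht k)).le
  -- compactness: extract convergent subsequence of (u k, p k)
  have hKcpt : IsCompact (Metric.closedBall
      (0 : (EuclideanSpace ℝ (Fin n)) ×
        ((EuclideanSpace ℝ (Fin n)) × (EuclideanSpace ℝ (Fin n)))) 1) :=
    isCompact_closedBall _ _
  have hmemK : ∀ k, (u k, p k) ∈ Metric.closedBall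
      (0 : (EuclideanSpace ℝ (Fin n)) ×
        ((EuclideanSpace ℝ (Fin n)) × (EuclideanSpace ℝ (Fin n)))) 1 := by
    intro k
    rw [Metric.mem_closedBall, dist_zero_right]
    have : ‖((u k, p k) : (EuclideanSpace ℝ (Fin n)) × _)‖ = max ‖u k‖ ‖p k‖ := rfl
    rw [this, hu1 k]
    exact max_le le_rfl (hpnorm k)
  obtain ⟨l, _, φ, hφ, hφtend⟩ := hKcpt.tendsto_subseq hmemK
  set u0 := l.1 with hu0
  set p0 := l.2 with hp0
  have htendu : Tendsto (fun k => u (φ k)) atTop (nhds u0) :=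
    (continuous_fst.tendsto l).comp hφtend
  have htendp : Tendsto (fun k => p (φ k)) atTop (nhds p0) :=
    (continuous_snd.tendsto l).comp hφtend
  -- limit inner product bound
  have hinnerlim : Tendsto (fun k => |⟪(p (φ k)).1, u (φ k)⟫|) atTop
      (nhds |⟪p0.1, u0⟫|) := by
    apply Tendsto.abs
    exact Tendsto.inner ((continuous_fst.tendsto p0).comp htendp) htendu
  have h0κ : (2 * κ)⁻¹ ≤ |⟪p0.1, u0⟫| :=
    ge_of_tendsto hinnerlim (Eventually.of_forall fun k => hinner (φ k))
  -- diagonal extraction of Fréchet normals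
  have happrox : ∀ k : ℕ, ∃ x' y' q, y' ∈ F x' ∧ q ∈ gphFrechetNormal F x' y' ∧
      ‖x' - xs (φ k)‖ < min (‖xs (φ k) - xbar‖ / (k+1)) (1/(k+1)) ∧
      ‖y' - 0‖ < min (‖xs (φ k) - xbar‖ / (k+1)) (1/(k+1)) ∧
      ‖q - p (φ k)‖ < min (‖xs (φ k) - xbar‖ / (k+1)) (1/(k+1)) := by
    intro k
    exact limiting_approx (hplim (φ k))
      (lt_min (div_pos (ht (φ k)) (by positivity)) (by positivity))
  choose x' y' q hy' hq hx'c hy'c hqc using happrox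
  set T : ℕ → ℝ := fun k => ‖xs (φ k) - xbar‖ with hT
  have hTpos : ∀ k, 0 < T k := fun k => ht (φ k)
  have hTne : ∀ k, T k ≠ 0 := fun k => (hTpos k).ne'
  set du : ℕ → EuclideanSpace ℝ (Fin n) := fun k => (T k)⁻¹ • (x' k - xbar) with hdu
  set dv : ℕ → EuclideanSpace ℝ (Fin n) := fun k => (T k)⁻¹ • (y' k) with hdv
  have he1 : ∀ k, xbar + T k • du k = x' k := by
    intro k
    rw [hdu]
    show xbar + T k • ((T k)⁻¹ • (x' k - xbar)) = x' k
    rw [smul_inv_smul₀ (hTne k)]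
    abel
  have he2 : ∀ k, (0 : EuclideanSpace ℝ (Fin n)) + T k • dv k = y' k := by
    intro k
    rw [hdv]
    show (0 : EuclideanSpace ℝ (Fin n)) + T k • ((T k)⁻¹ • (y' k)) = y' k
    rw [smul_inv_smul₀ (hTne k)]
    abel
  -- basic sequence tendstos
  have haux : Tendsto (fun k : ℕ => 1 / ((k:ℝ)+1)) atTop (nhds 0) :=
    tendsto_one_div_add_atTop_nhds_zero_nat
  have hTbound : ∀ k, T k ≤ 1 / ((k:ℝ)+1) := by
    intro k
    have h1 : T k < 1 / ((φ k : ℝ)+1) :=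
      lt_of_lt_of_le (hxlt (φ k)) (min_le_right _ _)
    have h2 : (1:ℝ) / ((φ k : ℝ)+1) ≤ 1 / ((k:ℝ)+1) := by
      apply one_div_le_one_div_of_le (by positivity)
      have h3 : k ≤ φ k := hφ.le_apply
      exact_mod_cast Nat.add_le_add_right h3 1
    linarith
  have hTtend : Tendsto T atTop (nhds 0) :=
    squeeze_zero (fun k => (hTpos k).le) hTbound haux
  have hdutend : Tendsto du atTop (nhds u0) := by
    have hsplit : ∀ k, du k = u (φ k) + (T k)⁻¹ • (x' k - xs (φ k)) := by
      intro k
      rw [hdu]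
      show (T k)⁻¹ • (x' k - xbar) = u (φ k) + (T k)⁻¹ • (x' k - xs (φ k))
      have hx : x' k - xbar = (xs (φ k) - xbar) + (x' k - xs (φ k)) := by abel
      rw [hx, smul_add]
    have herr : Tendsto (fun k => (T k)⁻¹ • (x' k - xs (φ k))) atTop (nhds 0) := by
      apply squeeze_zero_norm (a := fun k : ℕ => 1 / ((k:ℝ)+1)) _ haux
      intro k
      rw [norm_smul, norm_inv, Real.norm_eq_abs, abs_of_pos (hTpos k)]
      have h1 : ‖x' k - xs (φ k)‖ ≤ T k / ((k:ℝ)+1) :=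
        le_of_lt (lt_of_lt_of_le (hx'c k) (min_le_left _ _))
      calc (T k)⁻¹ * ‖x' k - xs (φ k)‖ ≤ (T k)⁻¹ * (T k / ((k:ℝ)+1)) := by
            exact mul_le_mul_of_nonneg_left h1 (inv_pos.2 (hTpos k)).le
        _ = 1 / ((k:ℝ)+1) := by
            rw [div_eq_mul_inv, ← mul_assoc, inv_mul_cancel₀ (hTne k), one_mul, one_div]
    have := htendu.add herr
    rw [add_zero] at this
    exact this.congr fun k => (hsplit k).symm
  have hdvtend : Tendsto dv atTop (nhds 0) := by
    apply squeeze_zero_norm (a := fun k : ℕ => 1 / ((k:ℝ)+1)) _ haux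
    intro k
    rw [hdv]
    show ‖(T k)⁻¹ • (y' k)‖ ≤ 1 / ((k:ℝ)+1)
    rw [norm_smul, norm_inv, Real.norm_eq_abs, abs_of_pos (hTpos k)]
    have h1 : ‖y' k‖ ≤ T k / ((k:ℝ)+1) := by
      have := lt_of_lt_of_le (hy'c k) (min_le_left _ _)
      rw [sub_zero] at this
      exact this.le
    calc (T k)⁻¹ * ‖y' k‖ ≤ (T k)⁻¹ * (T k / ((k:ℝ)+1)) := by
          exact mul_le_mul_of_nonneg_left h1 (inv_pos.2 (hTpos k)).le
      _ = 1 / ((k:ℝ)+1) := by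
            rw [div_eq_mul_inv, ← mul_assoc, inv_mul_cancel₀ (hTne k), one_mul, one_div]
  have hqtend : Tendsto q atTop (nhds p0) := by
    have herr : Tendsto (fun k => q k - p (φ k)) atTop (nhds 0) := by
      apply squeeze_zero_norm (a := fun k : ℕ => 1 / ((k:ℝ)+1)) _ haux
      intro k
      exact le_of_lt (lt_of_lt_of_le (hqc k) (min_le_right _ _))
    have := herr.add htendp
    rw [zero_add] at this
    exact this.congr fun k => by abel
  -- membership in the directional limiting normal cone
  have hmem : p0 ∈ gphDirLimitingNormal F xbar 0 u0 0 := by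
    refine ⟨T, du, dv, q, fun k => ⟨hTpos k, ?_, ?_⟩, hTtend, hdutend, hdvtend, hqtend⟩
    · rw [he1 k, he2 k]; exact hy' k
    · rw [he1 k, he2 k]; exact hq k
  -- contradiction with semismoothness*
  have hzero := hss u0 0 p0 hmem
  rw [inner_zero_right, add_zero] at hzero
  rw [hzero, abs_zero] at h0κ
  have : (0:ℝ) < (2 * κ)⁻¹ := by positivity
  linarith
end

section
/- Let f : ℝⁿ → ℝⁿ be strongly monotone with modulus μ_f > 0, let q be proper convex lsc, γ > 0, λ = 1/γ, and let x^{(k+1)} = T^{DR}_λ(x^{(k)}) be Douglas–Rachford iterates. Then ‖u_{γ}(x^{(k+1)})‖² ≤ ⟨u_γ(x^{(k+1)}), u_γ(x^{(k)})⟩ − λ⟨f(x^{(k+1)}) − f(x^{(k)}), x^{(k+1)} − x^{(k)}⟩, and consequently ‖u_γ(x^{(k+1)})‖ < ‖u_γ(x^{(k)})‖ whenever x^{(k+1)} ≠ x^{(k)}. -/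
open RealInnerProductSpace Set Filter Topology

variable {H : Type*} [NormedAddCommGroup H] [InnerProductSpace ℝ H]

lemma prox_key (f : H → H) (q : H → EReal) (hproper : ProperFun q) (γ : ℝ) (hγ : 0 < γ)
    (Jq : H → H) (hJq : ∀ z, ∃ v ∈ subdiff q (Jq z), z = Jq z + (1 / γ) • v)
    (x u : H) (hu : ∀ w, proxObj f q γ x u ≤ proxObj f q γ x w) :
    ∃ c : ℝ, q (x + u) = (c : EReal) ∧ x + u = Jq (x - (1 / γ) • f x) ∧
      ∀ (w : H) (cw : ℝ), q (x + w) = (cw : EReal) →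
        γ / 2 * ‖u‖ ^ 2 + ⟪f x, u⟫ + c + γ / 2 * ‖w - u‖ ^ 2 ≤
          γ / 2 * ‖w‖ ^ 2 + ⟪f x, w⟫ + cw := by
  obtain ⟨v, hv, hz⟩ := hJq (x - (1 / γ) • f x)
  set y₀ := Jq (x - (1 / γ) • f x) with hy₀
  set u₀ := y₀ - x with hu₀def
  have hγ' : γ ≠ 0 := ne_of_gt hγ
  have hxu₀ : x + u₀ = y₀ := by rw [hu₀def]; abel
  have hv_eq : v = -(γ • u₀) - f x := by
    have h1 : (1 / γ) • v = x - (1 / γ) • f x - y₀ := by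
      rw [hz]; abel
    have h2 : γ • ((1 / γ) • v) = v := by
      rw [smul_smul]; field_simp; rw [one_smul]
    rw [h1, smul_sub, smul_sub, smul_smul] at h2
    field_simp at h2
    rw [← h2, hu₀def, smul_sub, one_smul]; abel
  -- q y₀ finite
  obtain ⟨x₀, hx₀⟩ := hproper.1
  have hy₀top : q y₀ ≠ ⊤ := by
    intro h
    have := hv x₀
    rw [h] at this
    rw [EReal.top_add_coe, top_le_iff] at this
    exact hx₀ this
  have hc₀ : q y₀ = ((q y₀).toReal : EReal) := (EReal.coe_toReal hy₀top (hproper.2 y₀)).symm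
  set c₀ := (q y₀).toReal with hc₀def
  -- strengthened inequality for u₀
  have hstrong : ∀ (w : H) (cw : ℝ), q (x + w) = (cw : EReal) →
      γ / 2 * ‖u₀‖ ^ 2 + ⟪f x, u₀⟫ + c₀ + γ / 2 * ‖w - u₀‖ ^ 2 ≤
        γ / 2 * ‖w‖ ^ 2 + ⟪f x, w⟫ + cw := by
    intro w cw hcw
    have hsub := hv (x + w)
    rw [hc₀, hcw, ← EReal.coe_add, EReal.coe_le_coe_iff] at hsub
    have hxw : (x + w) - y₀ = w - u₀ := by rw [hu₀def]; abel
    rw [hxw, hv_eq] at hsub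
    have e1 : ⟪-(γ • u₀) - f x, w - u₀⟫ =
        -(γ * (⟪u₀, w⟫ - ⟪u₀, u₀⟫)) - (⟪f x, w⟫ - ⟪f x, u₀⟫) := by
      simp only [inner_sub_left, inner_sub_right, inner_smul_left, inner_neg_left,
        RCLike.conj_to_real]
      ring
    have e2 : ‖w - u₀‖ ^ 2 = ‖w‖ ^ 2 - 2 * ⟪u₀, w⟫ + ‖u₀‖ ^ 2 := by
      rw [norm_sub_sq_real, real_inner_comm]
    have e3 : ⟪u₀, u₀⟫ = ‖u₀‖ ^ 2 := real_inner_self_eq_norm_sq u₀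
    rw [e1] at hsub
    nlinarith [hsub]
  -- q (x+u) finite
  have hobj₀ : proxObj f q γ x u₀ = ((γ / 2 * ‖u₀‖ ^ 2 + ⟪f x, u₀⟫ + c₀ : ℝ) : EReal) := by
    rw [proxObj, hxu₀, hc₀]; exact (EReal.coe_add _ _).symm
  have h1 := hu u₀
  rw [hobj₀] at h1
  have hqutop : q (x + u) ≠ ⊤ := by
    intro h
    rw [proxObj, h, EReal.coe_add_top, top_le_iff] at h1
    exact EReal.coe_ne_top _ h1
  have hcu : q (x + u) = ((q (x + u)).toReal : EReal) :=
    (EReal.coe_toReal hqutop (hproper.2 (x + u))).symm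
  set cu := (q (x + u)).toReal with hcudef
  have h1' : γ / 2 * ‖u‖ ^ 2 + ⟪f x, u⟫ + cu ≤ γ / 2 * ‖u₀‖ ^ 2 + ⟪f x, u₀⟫ + c₀ := by
    rw [proxObj, hcu] at h1
    exact_mod_cast h1
  have hB := hstrong u cu hcu
  have hnn : ‖u - u₀‖ ^ 2 ≤ 0 := by nlinarith
  have huu₀ : u = u₀ := by
    have : ‖u - u₀‖ = 0 := by nlinarith [sq_nonneg ‖u - u₀‖, norm_nonneg (u - u₀)]
    rw [norm_eq_zero, sub_eq_zero] at this; exact this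
  have hcuc₀ : cu = c₀ := by
    have : ((cu : ℝ) : EReal) = ((c₀ : ℝ) : EReal) := by rw [← hcu, ← hc₀, huu₀, hxu₀]
    exact_mod_cast this
  refine ⟨cu, hcu.symm ▸ hcu, ?_, ?_⟩
  · rw [huu₀, hxu₀, hy₀]
  · intro w cw hcw
    rw [huu₀, hcuc₀]
    exact hstrong w cw hcw

set_option maxHeartbeats 1000000 in
/-- residual inequality for the Douglas–Rachford iteration:
`‖u_γ(x')‖² ≤ ⟨u_γ(x'), u_γ(x)⟩ − λ⟨f(x')−f(x), x'−x⟩`, and strict residual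
decrease when `x' ≠ x` (with `f` strongly monotone). -/
theorem DR_residual_inequality
    {n : ℕ} (f : EuclideanSpace ℝ (Fin n) → EuclideanSpace ℝ (Fin n))
    (q : EuclideanSpace ℝ (Fin n) → EReal)
    (hf : Continuous f) (hproper : ProperFun q) (hconv : ConvexFun q)
    (hlsc : LowerSemicontinuous q)
    (γ μf : ℝ) (hγ : 0 < γ) (hμf : 0 < μf)
    (hsm : ∀ x₁ x₂, μf * ‖x₂ - x₁‖ ^ 2 ≤ ⟪f x₂ - f x₁, x₂ - x₁⟫)
    (Jf Jq : EuclideanSpace ℝ (Fin n) → EuclideanSpace ℝ (Fin n))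
    (hJf : ∀ z, z = Jf z + (1 / γ) • f (Jf z))
    (hJq : ∀ z, ∃ v ∈ subdiff q (Jq z), z = Jq z + (1 / γ) • v)
    (x x' u u' : EuclideanSpace ℝ (Fin n))
    (hx' : x' = Jf (Jq (x - (1 / γ) • f x) + (1 / γ) • f x))
    (hu : ∀ w, proxObj f q γ x u ≤ proxObj f q γ x w)
    (hu' : ∀ w, proxObj f q γ x' u' ≤ proxObj f q γ x' w) :
    ‖u'‖ ^ 2 ≤ ⟪u', u⟫ - (1 / γ) * ⟪f x' - f x, x' - x⟫ ∧
      (x' ≠ x → ‖u'‖ < ‖u‖) := by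
  obtain ⟨c, hc, hJqx, hineq⟩ := prox_key f q hproper γ hγ Jq hJq x u hu
  obtain ⟨c', hc', hJqx', hineq'⟩ := prox_key f q hproper γ hγ Jq hJq x' u' hu'
  have hγ' : γ ≠ 0 := ne_of_gt hγ
  set d := x' - x with hd
  set Δ := f x' - f x with hΔ
  -- u = d + (1/γ) • Δ
  have hvf := hJf (Jq (x - (1 / γ) • f x) + (1 / γ) • f x)
  rw [← hx'] at hvf
  have h2 : Jq (x - (1 / γ) • f x) = x' + (1 / γ) • f x' - (1 / γ) • f x :=
    eq_sub_of_add_eq hvf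
  have h3 := hJqx
  rw [h2] at h3
  have hueq : u = d + (1 / γ) • Δ := by
    have h4 : u = x' + (1 / γ) • f x' - (1 / γ) • f x - x := by rw [← h3]; abel
    rw [h4, hd, hΔ, smul_sub]; abel
  have R : ∀ w : EuclideanSpace ℝ (Fin n), γ * ⟪w, u⟫ = γ * ⟪w, d⟫ + ⟪w, Δ⟫ := by
    intro w
    rw [hueq, inner_add_right, inner_smul_right, mul_add, ← mul_assoc,
      mul_one_div_cancel hγ', one_mul]
  -- the two strengthened inequalities
  have I1 := hineq (u' + d) c' (by
    rw [show x + (u' + d) = x' + u' by rw [hd]; abel]; exact hc')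
  have I2 := hineq' (u - d) c (by
    rw [show x' + (u - d) = x + u by rw [hd]; abel]; exact hc)
  -- expansions
  have e1 : ‖u' + d - u‖ ^ 2 =
      ‖u'‖ ^ 2 + ‖u‖ ^ 2 + ‖d‖ ^ 2 - 2 * ⟪u', u⟫ + 2 * ⟪u', d⟫ - 2 * ⟪u, d⟫ := by
    simp only [← real_inner_self_eq_norm_sq, inner_sub_left, inner_sub_right,
      inner_add_left, inner_add_right]
    rw [real_inner_comm d u', real_inner_comm u u', real_inner_comm d u]; ring
  have e2 : ‖u - d - u'‖ ^ 2 =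
      ‖u'‖ ^ 2 + ‖u‖ ^ 2 + ‖d‖ ^ 2 - 2 * ⟪u', u⟫ + 2 * ⟪u', d⟫ - 2 * ⟪u, d⟫ := by
    rw [show u - d - u' = -(u' + d - u) by abel, norm_neg, e1]
  have e3 : ‖u' + d‖ ^ 2 = ‖u'‖ ^ 2 + 2 * ⟪u', d⟫ + ‖d‖ ^ 2 := by
    rw [norm_add_sq_real]
  have e4 : ‖u - d‖ ^ 2 = ‖u‖ ^ 2 - 2 * ⟪u, d⟫ + ‖d‖ ^ 2 := by
    rw [norm_sub_sq_real]
  have e5 : ⟪f x, u' + d⟫ = ⟪f x, u'⟫ + ⟪f x, d⟫ := inner_add_right _ _ _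
  have e6 : ⟪f x', u - d⟫ = ⟪f x', u⟫ - ⟪f x', d⟫ := inner_sub_right _ _ _
  rw [show u' + d - u = u' + d - u from rfl] at I1
  rw [e1, e3, e5] at I1
  rw [e2, e4, e6] at I2
  -- Δ inner expansions
  have f1 : ⟪u', Δ⟫ = ⟪f x', u'⟫ - ⟪f x, u'⟫ := by
    rw [hΔ, real_inner_comm, inner_sub_left]
  have f2 : ⟪u, Δ⟫ = ⟪f x', u⟫ - ⟪f x, u⟫ := by
    rw [hΔ, real_inner_comm, inner_sub_left]
  have f3 : ⟪d, Δ⟫ = ⟪f x', d⟫ - ⟪f x, d⟫ := by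
    rw [hΔ, real_inner_comm, inner_sub_left]
  have f4 : ⟪Δ, d⟫ = ⟪d, Δ⟫ := real_inner_comm _ _
  have Ru := R u
  have Ru' := R u'
  have Rd := R d
  have hcomm : ⟪u, d⟫ = ⟪d, u⟫ := real_inner_comm _ _
  -- main inequality, multiplied by γ
  have main : γ * ‖u'‖ ^ 2 ≤ γ * ⟪u', u⟫ - ⟪Δ, d⟫ := by
    rw [real_inner_self_eq_norm_sq] at Ru
    linarith [I1, I2, Ru, Ru', Rd, f1, f2, f3, f4, hcomm]
  have part1 : ‖u'‖ ^ 2 ≤ ⟪u', u⟫ - (1 / γ) * ⟪Δ, d⟫ := by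
    rw [← mul_le_mul_iff_right₀ hγ, mul_sub]
    have : γ * ((1 / γ) * ⟪Δ, d⟫) = ⟪Δ, d⟫ := by field_simp
    rw [this]
    exact main
  refine ⟨part1, fun hne => ?_⟩
  have hdne : d ≠ 0 := by rw [hd, sub_ne_zero]; exact hne
  have hdpos : 0 < ‖d‖ := norm_pos_iff.mpr hdne
  have hsm' : μf * ‖d‖ ^ 2 ≤ ⟪Δ, d⟫ := hsm x x'
  have hcs : ⟪u', u⟫ ≤ ‖u'‖ * ‖u‖ := real_inner_le_norm u' u
  have hpos : 0 < (1 / γ) * (μf * ‖d‖ ^ 2) := by positivity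
  nlinarith [part1, hcs, hsm', hpos, norm_nonneg u', norm_nonneg u,
    mul_le_mul_of_nonneg_left hsm' (le_of_lt (one_div_pos.mpr hγ)),
    sq_nonneg (‖u'‖ - ‖u‖)]
end

section
/- Suppose in addition to the setting of the Douglas–Rachford residual inequality that f is Lipschitz with constant l on the relevant set and strongly monotone with modulus μ_f > 0. Then from ‖u^{(k+1)}‖² ≤ ‖u^{(k+1)}‖‖u^{(k)}‖ − (μ_f/γ)‖x^{(k+1)} − x^{(k)}‖² and (γ/(γ+l))‖u^{(k)}‖ ≤ ‖x^{(k+1)} − x^{(k)}‖ ≤ ‖u^{(k)}‖ it follows that ‖u^{(k+1)}‖ < τ‖u^{(k)}‖ with τ := 1 − μ_f γ/(γ+l)² < 1. -/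
/-- Q-linear decrease of the Douglas–Rachford residual: from
`‖u'‖² ≤ ‖u'‖‖u‖ − (μ_f/γ)‖x'−x‖²` and `(γ/(γ+l))‖u‖ ≤ ‖x'−x‖ ≤ ‖u‖` it follows
that `‖u'‖ < τ‖u‖` with `τ = 1 − μ_f γ/(γ+l)² < 1`. -/
theorem DR_residual_linear_decrease
    {n : ℕ} (x x' u u' : EuclideanSpace ℝ (Fin n))
    (μf γ l : ℝ) (hμf : 0 < μf) (hγ : 0 < γ) (hl : 0 ≤ l) (hu : u ≠ 0)
    (h1 : ‖u'‖ ^ 2 ≤ ‖u'‖ * ‖u‖ - (μf / γ) * ‖x' - x‖ ^ 2)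
    (h2 : (γ / (γ + l)) * ‖u‖ ≤ ‖x' - x‖)
    (h3 : ‖x' - x‖ ≤ ‖u‖) :
    ‖u'‖ < (1 - μf * γ / (γ + l) ^ 2) * ‖u‖ ∧ 1 - μf * γ / (γ + l) ^ 2 < 1 := by
  have hb : 0 < ‖u‖ := norm_pos_iff.mpr hu
  have ha : 0 ≤ ‖u'‖ := norm_nonneg _
  have hd : 0 ≤ ‖x' - x‖ := norm_nonneg _
  set a := ‖u'‖
  set b := ‖u‖
  set d := ‖x' - x‖
  have hγl : 0 < γ + l := by linarith
  have hc : 0 < μf * γ / (γ + l) ^ 2 := by positivity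
  have hd2 : (γ / (γ + l)) ^ 2 * b ^ 2 ≤ d ^ 2 := by
    have h0 : 0 ≤ (γ / (γ + l)) * b := by positivity
    nlinarith [mul_le_mul h2 h2 h0 hd]
  have key : a ^ 2 ≤ a * b - (μf * γ / (γ + l) ^ 2) * b ^ 2 := by
    have : (μf / γ) * ((γ / (γ + l)) ^ 2 * b ^ 2) ≤ (μf / γ) * d ^ 2 :=
      mul_le_mul_of_nonneg_left hd2 (by positivity)
    have heq : (μf / γ) * ((γ / (γ + l)) ^ 2 * b ^ 2)
        = (μf * γ / (γ + l) ^ 2) * b ^ 2 := by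
      field_simp
    nlinarith
  constructor
  · by_contra hcon
    push_neg at hcon
    have hab : a ≤ b := by nlinarith
    nlinarith [mul_le_mul_of_nonneg_right hcon ha, mul_pos hc (mul_pos hb hb),
      mul_le_mul_of_nonneg_left hab (le_of_lt hc), mul_pos hc hb]
  · nlinarith
end

section
/- Let ∂q_i ⊂ ℝ × ℝ be the maximal monotone operator whose graph is the polygonal line through the points (ξ₁,−∞),(ξ₁,η₁),(ξ₂,η₂),…,(ξ_{2m},η_{2m}),(ξ_{2m},+∞), where Δξ_j = ξ_{j+1}−ξ_j is > 0 for odd j and = 0 for even j, Δη_j = η_{j+1}−η_j is ≥ 0 for odd j and > 0 for even j. For a graph point (x_i, x_i*) define G_{ii} = 1 if x_i ∈ A_i := {ξ₁} ∪ {ξ_{2m}} ∪ {ξ_j : Δξ_j = 0}, and G_{ii} = Δη_j/(Δξ_j + Δη_j) if x_i ∈ [ξ_j, ξ_{j+1}]∖A_i with j odd. Then G_{ii} ∈ [0,1] and the pair ((1−G_{ii})v, G_{ii}v) lies in the graph of the limiting coderivative D*(∂q_i)(x_i, x_i*) for every v ∈ ℝ. -/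
open RealInnerProductSpace Set Filter Topology

variable {H : Type*} [NormedAddCommGroup H] [InnerProductSpace ℝ H]

set_option linter.unusedSectionVars false

/-- The polygonal graph multifunction. -/
def polyPhi (m : ℕ) (ξ η : ℕ → ℝ) : ℝ → Set ℝ := fun a =>
  {b : ℝ | (a = ξ 0 ∧ b ≤ η 0) ∨ (a = ξ (2 * m - 1) ∧ η (2 * m - 1) ≤ b) ∨
    ∃ j < 2 * m - 1, ∃ t ∈ Icc (0 : ℝ) 1,
      a = ξ j + t * (ξ (j + 1) - ξ j) ∧ b = η j + t * (η (j + 1) - η j)}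


lemma limiting_of_seq {H : Type*} [NormedAddCommGroup H] [InnerProductSpace ℝ H]
    (Φ : H → Set H) (x y : H) (p : H × H) (ys : ℕ → H)
    (h1 : ∀ k, ys k ∈ Φ x) (h2 : ∀ k, p ∈ gphFrechetNormal Φ x (ys k))
    (h3 : Tendsto ys atTop (nhds y)) : p ∈ gphLimitingNormal Φ x y :=
  ⟨fun _ => x, ys, fun _ => p, fun k => ⟨h1 k, h2 k⟩, tendsto_const_nhds, h3, tendsto_const_nhds⟩


/-- Fréchet normal from local verticality. -/
lemma frechet_vertical (Φ : ℝ → Set ℝ) (a b v δ0 : ℝ) (hδ : 0 < δ0)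
    (h : ∀ x' y', y' ∈ Φ x' → |y' - b| < δ0 → x' = a) :
    ((v, (0:ℝ)) ∈ gphFrechetNormal Φ a b) := by
  intro ε hε
  refine ⟨δ0, hδ, fun x' y' hy _ h2 => ?_⟩
  have hx' : x' = a := h x' y' hy (by simpa [Real.norm_eq_abs] using h2)
  subst hx'
  simp [RCLike.inner_apply]
  positivity

section mono
variable (m : ℕ) (ξ η : ℕ → ℝ)
variable (hΔξ : ∀ j, j < 2 * m - 1 → (Even j → ξ j < ξ (j + 1)) ∧ (¬Even j → ξ (j + 1) = ξ j))
variable (hΔη : ∀ j, j < 2 * m - 1 → (Even j → η j ≤ η (j + 1)) ∧ (¬Even j → η j < η (j + 1)))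

include hΔξ in
lemma xi_succ_le {j : ℕ} (hj : j < 2 * m - 1) : ξ j ≤ ξ (j + 1) := by
  by_cases h : Even j
  · exact ((hΔξ j hj).1 h).le
  · exact ((hΔξ j hj).2 h).ge

include hΔξ in
lemma xi_mono {i k : ℕ} (hik : i ≤ k) (hk : k ≤ 2 * m - 1) : ξ i ≤ ξ k := by
  induction k, hik using Nat.le_induction with
  | base => exact le_rfl
  | succ k hik ih =>
    exact (ih (by omega)).trans (xi_succ_le m ξ hΔξ (by omega))

include hΔξ in
lemma xi_strict {i k : ℕ} (hi : Even i) (hik : i < k) (hk : k ≤ 2 * m - 1) : ξ i < ξ k :=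
  lt_of_lt_of_le ((hΔξ i (by omega)).1 hi) (xi_mono m ξ hΔξ (by omega) hk)

include hΔη in
lemma eta_succ_le {j : ℕ} (hj : j < 2 * m - 1) : η j ≤ η (j + 1) := by
  by_cases h : Even j
  · exact (hΔη j hj).1 h
  · exact ((hΔη j hj).2 h).le

include hΔη in
lemma eta_mono {i k : ℕ} (hik : i ≤ k) (hk : k ≤ 2 * m - 1) : η i ≤ η k := by
  induction k, hik using Nat.le_induction with
  | base => exact le_rfl
  | succ k hik ih =>
    exact (ih (by omega)).trans (eta_succ_le m η hΔη (by omega))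

include hΔη in
lemma eta_strict {i k : ℕ} (hi : ¬Even i) (hik : i < k) (hk : k ≤ 2 * m - 1) : η i < η k :=
  lt_of_lt_of_le ((hΔη i (by omega)).2 hi) (eta_mono m η hΔη (by omega) hk)

end mono

section pts
variable (m : ℕ) (hm : 1 ≤ m) (ξ η : ℕ → ℝ)
variable (hΔξ : ∀ j, j < 2 * m - 1 → (Even j → ξ j < ξ (j + 1)) ∧ (¬Even j → ξ (j + 1) = ξ j))
variable (hΔη : ∀ j, j < 2 * m - 1 → (Even j → η j ≤ η (j + 1)) ∧ (¬Even j → η j < η (j + 1)))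

include hm hΔη in
/-- (v,0) is Fréchet normal at points strictly inside the left vertical ray. -/
lemma frechet_left_ray (v b : ℝ) (hb : b < η 0) :
    ((v, (0:ℝ)) ∈ gphFrechetNormal (polyPhi m ξ η) (ξ 0) b) := by
  refine frechet_vertical _ _ _ _ (η 0 - b) (by linarith) ?_
  rintro x' y' (⟨h1, h2⟩ | ⟨h1, h2⟩ | ⟨j, hj, t, ⟨ht0, ht1⟩, h1, h2⟩) hyb
  · exact h1
  · exfalso
    have : η 0 ≤ η (2 * m - 1) := eta_mono m η hΔη (by omega) le_rfl
    have : |y' - b| ≥ η 0 - b := by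
      refine le_trans ?_ (le_abs_self _); linarith
    linarith [hyb, this]
  · exfalso
    have h0j : η 0 ≤ η j := eta_mono m η hΔη (by omega) (by omega)
    have hΔ : η j ≤ η (j + 1) := eta_succ_le m η hΔη hj
    have hy0 : η 0 ≤ y' := by nlinarith
    have : |y' - b| ≥ η 0 - b := by
      refine le_trans ?_ (le_abs_self _); linarith
    linarith

include hm hΔη in
/-- (v,0) is Fréchet normal at points strictly inside the right vertical ray. -/
lemma frechet_right_ray (v b : ℝ) (hb : η (2 * m - 1) < b) :
    ((v, (0:ℝ)) ∈ gphFrechetNormal (polyPhi m ξ η) (ξ (2 * m - 1)) b) := by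
  refine frechet_vertical _ _ _ _ (b - η (2 * m - 1)) (by linarith) ?_
  rintro x' y' (⟨h1, h2⟩ | ⟨h1, h2⟩ | ⟨j, hj, t, ⟨ht0, ht1⟩, h1, h2⟩) hyb
  · exfalso
    have : η 0 ≤ η (2 * m - 1) := eta_mono m η hΔη (by omega) le_rfl
    have : |y' - b| ≥ b - η (2 * m - 1) := by
      rw [abs_sub_comm]; refine le_trans ?_ (le_abs_self _); linarith
    linarith
  · exact h1
  · exfalso
    have hΔ : η j ≤ η (j + 1) := eta_succ_le m η hΔη hj
    have h1j : η (j + 1) ≤ η (2 * m - 1) := eta_mono m η hΔη (by omega) le_rfl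
    have hy0 : y' ≤ η (j + 1) := by nlinarith
    have : |y' - b| ≥ b - η (2 * m - 1) := by
      rw [abs_sub_comm]; refine le_trans ?_ (le_abs_self _); linarith
    linarith

include hΔξ hΔη in
/-- (v,0) is Fréchet normal at points strictly inside a vertical segment. -/
lemma frechet_vertical_seg (v b : ℝ) (j : ℕ) (hj : j < 2 * m - 1) (hv : ξ (j + 1) = ξ j)
    (hb1 : η j < b) (hb2 : b < η (j + 1)) :
    ((v, (0:ℝ)) ∈ gphFrechetNormal (polyPhi m ξ η) (ξ j) b) := by
  have hjodd : ¬ Even j := fun he => absurd ((hΔξ j hj).1 he) (by rw [hv]; exact lt_irrefl _)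
  have hj1 : 1 ≤ j := by
    rcases Nat.eq_zero_or_pos j with h | h
    · exact absurd (h ▸ hjodd) (by simp [h])
    · exact h
  refine frechet_vertical _ _ _ _ (min (b - η j) (η (j + 1) - b)) (by
    apply lt_min <;> linarith) ?_
  rintro x' y' (⟨h1, h2⟩ | ⟨h1, h2⟩ | ⟨j', hj', t, ⟨ht0, ht1⟩, h1, h2⟩) hyb
  · exfalso
    have h0 : η 0 ≤ η j := eta_mono m η hΔη (by omega) (by omega)
    have : |y' - b| ≥ b - η j := by
      rw [abs_sub_comm]; refine le_trans ?_ (le_abs_self _); linarith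
    have := lt_of_lt_of_le hyb (min_le_left _ _)
    linarith
  · exfalso
    have h0 : η (j + 1) ≤ η (2 * m - 1) := eta_mono m η hΔη (by omega) le_rfl
    have : |y' - b| ≥ η (j + 1) - b := by
      refine le_trans ?_ (le_abs_self _); linarith
    have := lt_of_lt_of_le hyb (min_le_right _ _)
    linarith
  · rcases lt_trichotomy j' j with h | h | h
    · exfalso
      have hΔ : η j' ≤ η (j' + 1) := eta_succ_le m η hΔη hj'
      have hy1 : y' ≤ η (j' + 1) := by nlinarith
      have h0 : η (j' + 1) ≤ η j := eta_mono m η hΔη (by omega) (by omega)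
      have : |y' - b| ≥ b - η j := by
        rw [abs_sub_comm]; refine le_trans ?_ (le_abs_self _); linarith
      have := lt_of_lt_of_le hyb (min_le_left _ _)
      linarith
    · subst h
      rw [h1, hv]; ring
    · exfalso
      have h0 : η (j + 1) ≤ η j' := eta_mono m η hΔη (by omega) (by omega)
      have hΔ : η j' ≤ η (j' + 1) := eta_succ_le m η hΔη hj'
      have hy1 : η j' ≤ y' := by nlinarith
      have : |y' - b| ≥ η (j + 1) - b := by
        refine le_trans ?_ (le_abs_self _); linarith
      have := lt_of_lt_of_le hyb (min_le_right _ _)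
      linarith

end pts

section sloped
variable (m : ℕ) (ξ η : ℕ → ℝ)
variable (hΔξ : ∀ j, j < 2 * m - 1 → (Even j → ξ j < ξ (j + 1)) ∧ (¬Even j → ξ (j + 1) = ξ j))
variable (hΔη : ∀ j, j < 2 * m - 1 → (Even j → η j ≤ η (j + 1)) ∧ (¬Even j → η j < η (j + 1)))

include hΔξ hΔη in
lemma frechet_sloped (v : ℝ) (j : ℕ) (hj : j < 2 * m - 1) (hje : Even j) (a b s G : ℝ)
    (hG : G = (η (j + 1) - η j) / ((ξ (j + 1) - ξ j) + (η (j + 1) - η j)))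
    (ha : a = ξ j + s * (ξ (j + 1) - ξ j)) (hb : b = η j + s * (η (j + 1) - η j))
    (ha1 : ξ j < a) (ha2 : a < ξ (j + 1)) :
    ((G * v, -((1 - G) * v)) ∈ gphFrechetNormal (polyPhi m ξ η) a b) := by
  have hΔ : 0 < ξ (j + 1) - ξ j := by linarith [(hΔξ j hj).1 hje]
  have hΔη' : 0 ≤ η (j + 1) - η j := by linarith [(hΔη j hj).1 hje]
  have key : G * (ξ (j + 1) - ξ j) - (1 - G) * (η (j + 1) - η j) = 0 := by
    rw [hG]; field_simp; ring
  intro ε hε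
  refine ⟨min (a - ξ j) (ξ (j + 1) - a), lt_min (by linarith) (by linarith), ?_⟩
  intro x' y' hy hxd hyd
  have hx1 : ξ j < x' := by
    have := lt_of_lt_of_le hxd (min_le_left _ _)
    have := abs_lt.1 this
    linarith [this.1]
  have hx2 : x' < ξ (j + 1) := by
    have := lt_of_lt_of_le hxd (min_le_right _ _)
    have := abs_lt.1 this
    linarith [this.2]
  rcases hy with ⟨h1, h2⟩ | ⟨h1, h2⟩ | ⟨j', hj', t, ⟨ht0, ht1⟩, h1, h2⟩
  · exfalso
    have : ξ 0 ≤ ξ j := xi_mono m ξ hΔξ (by omega) (by omega)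
    linarith [h1 ▸ hx1]
  · exfalso
    have : ξ (j + 1) ≤ ξ (2 * m - 1) := xi_mono m ξ hΔξ (by omega) le_rfl
    linarith [h1 ▸ hx2]
  · rcases lt_trichotomy j' j with h | h | h
    · exfalso
      have hΔ' : ξ j' ≤ ξ (j' + 1) := xi_succ_le m ξ hΔξ hj'
      have : x' ≤ ξ (j' + 1) := by nlinarith
      have : ξ (j' + 1) ≤ ξ j := xi_mono m ξ hΔξ (by omega) (by omega)
      linarith
    · subst h
      have hzero : (G * v) * (x' - a) + (-((1 - G) * v)) * (y' - b) = 0 := by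
        rw [h1, h2, ha, hb]
        linear_combination (v * (t - s)) * key
      simp only [RCLike.inner_apply, starRingEnd_apply, star_trivial]
      rw [mul_comm (x' - a), mul_comm (y' - b), hzero]
      positivity
    · exfalso
      have hΔ' : ξ j' ≤ ξ (j' + 1) := xi_succ_le m ξ hΔξ hj'
      have : ξ j' ≤ x' := by nlinarith
      have : ξ (j + 1) ≤ ξ j' := xi_mono m ξ hΔξ (by omega) (by omega)
      linarith

end sloped

section loc
variable (m : ℕ) (hm : 1 ≤ m) (ξ η : ℕ → ℝ)
variable (hΔξ : ∀ j, j < 2 * m - 1 → (Even j → ξ j < ξ (j + 1)) ∧ (¬Even j → ξ (j + 1) = ξ j))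
variable (hΔη : ∀ j, j < 2 * m - 1 → (Even j → η j ≤ η (j + 1)) ∧ (¬Even j → η j < η (j + 1)))

include hm hΔξ in
lemma loc_left (xstar : ℝ) (hx : xstar ∈ polyPhi m ξ η (ξ 0)) : xstar ≤ η 0 := by
  rcases hx with ⟨_, h2⟩ | ⟨h1, _⟩ | ⟨j, hj, t, ⟨ht0, ht1⟩, h1, h2⟩
  · exact h2
  · exact absurd h1 (ne_of_lt (xi_strict m ξ hΔξ (Even.zero) (by omega) le_rfl))
  · rcases Nat.eq_zero_or_pos j with hj0 | hj0
    · subst hj0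
      have hΔ : 0 < ξ 1 - ξ 0 := by linarith [(hΔξ 0 (by omega)).1 Even.zero]
      have ht : t = 0 := by
        have : t * (ξ 1 - ξ 0) = 0 := by linarith
        rcases mul_eq_zero.1 this with h | h
        · exact h
        · exact absurd h (ne_of_gt hΔ)
      rw [h2, ht]; simp
    · exfalso
      have h01 : ξ 0 < ξ j := xi_strict m ξ hΔξ Even.zero (by omega) (by omega)
      have hΔ' : ξ j ≤ ξ (j + 1) := xi_succ_le m ξ hΔξ hj
      nlinarith

include hm hΔξ in
lemma loc_right (xstar : ℝ) (hx : xstar ∈ polyPhi m ξ η (ξ (2 * m - 1))) :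
    η (2 * m - 1) ≤ xstar := by
  rcases hx with ⟨h1, _⟩ | ⟨_, h2⟩ | ⟨j, hj, t, ⟨ht0, ht1⟩, h1, h2⟩
  · exact absurd h1.symm (ne_of_lt (xi_strict m ξ hΔξ (Even.zero) (by omega) le_rfl))
  · exact h2
  · have hΔ' : ξ j ≤ ξ (j + 1) := xi_succ_le m ξ hΔξ hj
    have hle : ξ j + t * (ξ (j + 1) - ξ j) ≤ ξ (j + 1) := by nlinarith
    have hmono : ξ (j + 1) ≤ ξ (2 * m - 1) := xi_mono m ξ hΔξ (by omega) le_rfl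
    have heq : ξ (j + 1) = ξ (2 * m - 1) := le_antisymm hmono (by linarith [h1 ▸ hle])
    have hj2 : j + 1 = 2 * m - 1 := by
      by_contra hne
      have h2me : Even (2 * m - 2) := by simp [Nat.even_iff]; omega
      have : ξ (j + 1) < ξ (2 * m - 1) :=
        lt_of_le_of_lt (xi_mono m ξ hΔξ (by omega) (by omega))
          (xi_strict m ξ hΔξ h2me (by omega) le_rfl)
      linarith [heq]
    have hje : Even j := by simp [Nat.even_iff] at *; omega
    have hΔpos : 0 < ξ (j + 1) - ξ j := by linarith [(hΔξ j hj).1 hje]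
    have ht : t = 1 := by
      have h1' : ξ j + t * (ξ (j + 1) - ξ j) = ξ (j + 1) := by rw [← h1, heq]
      have : (t - 1) * (ξ (j + 1) - ξ j) = 0 := by linarith
      rcases mul_eq_zero.1 this with h | h
      · linarith
      · exact absurd h (ne_of_gt hΔpos)
    rw [h2, ht, ← hj2]; simp

include hm hΔξ hΔη in
lemma loc_vert (xstar : ℝ) (j : ℕ) (hj : j < 2 * m - 1) (hv : ξ (j + 1) = ξ j)
    (hne2 : ξ j ≠ ξ (2 * m - 1)) (hx : xstar ∈ polyPhi m ξ η (ξ j)) :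
    η j ≤ xstar ∧ xstar ≤ η (j + 1) := by
  have hjodd : ¬ Even j := fun he => absurd ((hΔξ j hj).1 he) (by rw [hv]; exact lt_irrefl _)
  have hj1 : 1 ≤ j := by
    rcases Nat.eq_zero_or_pos j with h | h
    · exact absurd (h ▸ hjodd) (by simp [h])
    · exact h
  have hj2 : j + 1 < 2 * m - 1 := by
    rcases Nat.lt_or_ge (j + 1) (2 * m - 1) with h | h
    · exact h
    · exact absurd (by rw [← hv]; congr 1; omega) hne2
  have hηle : η j ≤ η (j + 1) := eta_succ_le m η hΔη hj
  rcases hx with ⟨h1, _⟩ | ⟨h1, _⟩ | ⟨j', hj', t, ⟨ht0, ht1⟩, h1, h2⟩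
  · exfalso
    exact absurd h1 (ne_of_gt (xi_strict m ξ hΔξ Even.zero (by omega) (by omega)))
  · exact absurd h1 hne2
  · have hΔ' : ξ j' ≤ ξ (j' + 1) := xi_succ_le m ξ hΔξ hj'
    rcases lt_trichotomy j' j with h | h | h
    · -- j' < j : forced j' = j - 1, t = 1, xstar = η j
      have hub : ξ j + 0 ≤ ξ (j' + 1) := by nlinarith [h1 ▸ (by nlinarith : ξ j' + t * (ξ (j' + 1) - ξ j') ≤ ξ (j' + 1))]
      have hmono : ξ (j' + 1) ≤ ξ j := xi_mono m ξ hΔξ (by omega) (by omega)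
      have heq : ξ (j' + 1) = ξ j := le_antisymm hmono (by linarith)
      have hcase : j' + 1 = j := by
        by_contra hne
        have hlt : j' + 1 < j := by omega
        by_cases hpe : Even (j' + 1)
        · exact absurd heq (ne_of_lt (xi_strict m ξ hΔξ hpe hlt (by omega)))
        · have hpe2 : Even (j' + 2) := by simp [Nat.even_iff] at *; omega
          have hlt2 : j' + 2 < j := by
            rcases Nat.lt_or_ge (j' + 2) j with hh | hh
            · exact hh
            · exfalso
              have : j' + 2 = j := by omega
              simp [Nat.even_iff] at hjodd hpe ⊢
              omega
          have : ξ (j' + 1) < ξ j :=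
            lt_of_le_of_lt (xi_succ_le m ξ hΔξ (by omega))
              (xi_strict m ξ hΔξ hpe2 hlt2 (by omega))
          linarith [heq]
      have hje' : Even j' := by simp [Nat.even_iff] at *; omega
      have hΔpos : 0 < ξ (j' + 1) - ξ j' := by linarith [(hΔξ j' hj').1 hje']
      have ht : t = 1 := by
        have h1' : ξ j' + t * (ξ (j' + 1) - ξ j') = ξ (j' + 1) := by rw [← h1, heq]
        have : (t - 1) * (ξ (j' + 1) - ξ j') = 0 := by linarith
        rcases mul_eq_zero.1 this with hh | hh
        · linarith
        · exact absurd hh (ne_of_gt hΔpos)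
      have : xstar = η (j' + 1) := by rw [h2, ht]; ring
      rw [this, hcase]
      exact ⟨le_rfl, hηle⟩
    · subst h
      constructor
      · nlinarith
      · nlinarith
    · -- j' > j : forced j' = j + 1, t = 0, xstar = η (j+1)
      have hlb : ξ j' ≤ ξ j := by
        have : ξ j' ≤ ξ j' + t * (ξ (j' + 1) - ξ j') := by nlinarith
        linarith [h1 ▸ this]
      have hmono : ξ (j + 1) ≤ ξ j' := xi_mono m ξ hΔξ (by omega) (by omega)
      have heq : ξ j' = ξ j := le_antisymm hlb (by rw [← hv]; exact hmono)
      have hcase : j' = j + 1 := by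
        by_contra hne
        have hpe : Even (j + 1) := by simp [Nat.even_iff] at *; omega
        have : ξ (j + 1) < ξ j' := xi_strict m ξ hΔξ hpe (by omega) (by omega)
        rw [heq, hv] at this
        exact lt_irrefl _ this
      subst hcase
      have hje' : Even (j + 1) := by simp [Nat.even_iff] at *; omega
      have hΔpos : 0 < ξ (j + 1 + 1) - ξ (j + 1) := by linarith [(hΔξ (j + 1) hj2).1 hje']
      have ht : t = 0 := by
        have : t * (ξ (j + 1 + 1) - ξ (j + 1)) = 0 := by
          have := h1
          rw [heq] at this
          linarith
        rcases mul_eq_zero.1 this with hh | hh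
        · exact hh
        · exact absurd hh (ne_of_gt hΔpos)
      have : xstar = η (j + 1) := by rw [h2, ht]; ring
      rw [this]
      exact ⟨hηle, le_rfl⟩

end loc


lemma mem_vert (m : ℕ) (ξ η : ℕ → ℝ) (j : ℕ) (hj : j < 2 * m - 1) (hv : ξ (j + 1) = ξ j)
    (hd : η j < η (j + 1)) (b : ℝ) (hb1 : η j ≤ b) (hb2 : b ≤ η (j + 1)) :
    b ∈ polyPhi m ξ η (ξ j) := by
  right; right
  refine ⟨j, hj, (b - η j) / (η (j + 1) - η j),
    ⟨div_nonneg (by linarith) (by linarith), (div_le_one (by linarith)).mpr (by linarith)⟩,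
    by rw [hv]; ring, ?_⟩
  rw [div_mul_cancel₀ _ (ne_of_gt (by linarith : (0:ℝ) < η (j + 1) - η j))]
  ring

/-- coderivative selection for a one-dimensional polygonal maximal
monotone operator (0-indexed: index `j` here corresponds to `j+1` in the paper,
so "odd" paper indices are even here). -/
theorem polygonal_coderiv_selection
    (m : ℕ) (hm : 1 ≤ m) (ξ η : ℕ → ℝ)
    (hΔξ : ∀ j, j < 2 * m - 1 → (Even j → ξ j < ξ (j + 1)) ∧ (¬Even j → ξ (j + 1) = ξ j))
    (hΔη : ∀ j, j < 2 * m - 1 → (Even j → η j ≤ η (j + 1)) ∧ (¬Even j → η j < η (j + 1)))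
    (x xstar : ℝ)
    (hx : xstar ∈ (fun a => {b : ℝ | (a = ξ 0 ∧ b ≤ η 0) ∨ (a = ξ (2 * m - 1) ∧ η (2 * m - 1) ≤ b) ∨
        ∃ j < 2 * m - 1, ∃ t ∈ Icc (0 : ℝ) 1,
          a = ξ j + t * (ξ (j + 1) - ξ j) ∧ b = η j + t * (η (j + 1) - η j)}) x)
    (G : ℝ)
    (hG1 : (x = ξ 0 ∨ x = ξ (2 * m - 1) ∨ ∃ j < 2 * m - 1, ξ (j + 1) = ξ j ∧ x = ξ j) → G = 1)
    (hG2 : ∀ j, j < 2 * m - 1 → Even j → x ∈ Icc (ξ j) (ξ (j + 1)) →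
      ¬(x = ξ 0 ∨ x = ξ (2 * m - 1) ∨ ∃ j' < 2 * m - 1, ξ (j' + 1) = ξ j' ∧ x = ξ j') →
      G = (η (j + 1) - η j) / ((ξ (j + 1) - ξ j) + (η (j + 1) - η j))) :
    G ∈ Icc (0 : ℝ) 1 ∧
      ∀ v : ℝ, G * v ∈ coderiv
        (fun a => {b : ℝ | (a = ξ 0 ∧ b ≤ η 0) ∨ (a = ξ (2 * m - 1) ∧ η (2 * m - 1) ≤ b) ∨
          ∃ j < 2 * m - 1, ∃ t ∈ Icc (0 : ℝ) 1,
            a = ξ j + t * (ξ (j + 1) - ξ j) ∧ b = η j + t * (η (j + 1) - η j)})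
        x xstar ((1 - G) * v) := by
  have hxm : xstar ∈ polyPhi m ξ η x := hx
  by_cases hA : (x = ξ 0 ∨ x = ξ (2 * m - 1) ∨ ∃ j < 2 * m - 1, ξ (j + 1) = ξ j ∧ x = ξ j)
  · have hG : G = 1 := hG1 hA
    refine ⟨by rw [hG]; norm_num, ?_⟩
    intro v
    have hpair : ((G * v, -((1 - G) * v)) : ℝ × ℝ) = (v, 0) := by rw [hG]; norm_num
    show (G * v, -((1 - G) * v)) ∈ gphLimitingNormal (polyPhi m ξ η) x xstar
    rw [hpair]
    by_cases h0 : x = ξ 0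
    · subst h0
      have hxs : xstar ≤ η 0 := loc_left m hm ξ η hΔξ xstar hxm
      refine limiting_of_seq _ _ _ _ (fun k => xstar - 1 / (k + 1)) ?_ ?_ ?_
      · intro k
        left
        refine ⟨rfl, ?_⟩
        have : (0:ℝ) < 1 / ((k:ℝ) + 1) := by positivity
        linarith
      · intro k
        refine frechet_left_ray m hm ξ η hΔη v _ ?_
        have : (0:ℝ) < 1 / ((k:ℝ) + 1) := by positivity
        linarith
      · simpa using (tendsto_const_nhds : Tendsto (fun _ : ℕ => xstar) atTop (nhds xstar)).sub tendsto_one_div_add_atTop_nhds_zero_nat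
    · by_cases h1 : x = ξ (2 * m - 1)
      · subst h1
        have hxs : η (2 * m - 1) ≤ xstar := loc_right m hm ξ η hΔξ xstar hxm
        refine limiting_of_seq _ _ _ _ (fun k => xstar + 1 / (k + 1)) ?_ ?_ ?_
        · intro k
          right; left
          refine ⟨rfl, ?_⟩
          have : (0:ℝ) < 1 / ((k:ℝ) + 1) := by positivity
          linarith
        · intro k
          refine frechet_right_ray m hm ξ η hΔη v _ ?_
          have : (0:ℝ) < 1 / ((k:ℝ) + 1) := by positivity
          linarith
        · simpa using (tendsto_const_nhds : Tendsto (fun _ : ℕ => xstar) atTop (nhds xstar)).add tendsto_one_div_add_atTop_nhds_zero_nat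
      · rcases hA with h | h | ⟨j, hj, hv, hxj⟩
        · exact absurd h h0
        · exact absurd h h1
        subst hxj
        have hne2 : ξ j ≠ ξ (2 * m - 1) := h1
        obtain ⟨hl, hr⟩ := loc_vert m hm ξ η hΔξ hΔη xstar j hj hv hne2 hxm
        have hjodd : ¬ Even j := fun he => absurd ((hΔξ j hj).1 he) (by rw [hv]; exact lt_irrefl _)
        have hηlt : η j < η (j + 1) := (hΔη j hj).2 hjodd
        set c : ℝ := (η j + η (j + 1)) / 2 with hc
        have hc1 : η j < c := by rw [hc]; linarith
        have hc2 : c < η (j + 1) := by rw [hc]; linarith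
        have hbnd : ∀ k : ℕ, η j < xstar + (c - xstar) * (1 / (k + 1)) ∧
            xstar + (c - xstar) * (1 / (k + 1)) < η (j + 1) := by
          intro k
          have hθ0 : (0:ℝ) < 1 / ((k:ℝ) + 1) := by positivity
          have hθ1 : (1:ℝ) / ((k:ℝ) + 1) ≤ 1 := by
            rw [div_le_one (by positivity)]
            have : (0:ℝ) ≤ (k:ℝ) := Nat.cast_nonneg k
            linarith
          constructor
          · nlinarith [mul_nonneg (sub_nonneg.mpr hl) (sub_nonneg.mpr hθ1),
              mul_pos (sub_pos.mpr hc1) hθ0]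
          · nlinarith [mul_nonneg (sub_nonneg.mpr hr) (sub_nonneg.mpr hθ1),
              mul_pos (sub_pos.mpr hc2) hθ0]
        refine limiting_of_seq _ _ _ _ (fun k => xstar + (c - xstar) * (1 / (k + 1))) ?_ ?_ ?_
        · intro k
          exact mem_vert m ξ η j hj hv hηlt _ ((hbnd k).1.le) ((hbnd k).2.le)
        · intro k
          exact frechet_vertical_seg m ξ η hΔξ hΔη v _ j hj hv (hbnd k).1 (hbnd k).2
        · have h2 : Tendsto (fun k : ℕ => (c - xstar) * (1 / ((k:ℝ) + 1))) atTop (nhds 0) := by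
            simpa using tendsto_one_div_add_atTop_nhds_zero_nat.const_mul (c - xstar)
          simpa using tendsto_const_nhds.add h2
  · have hxmem := hxm
    rcases hxmem with ⟨h1, _⟩ | ⟨h1, _⟩ | ⟨j, hj, t, ⟨ht0, ht1⟩, h1, h2⟩
    · exact absurd (Or.inl h1) hA
    · exact absurd (Or.inr (Or.inl h1)) hA
    have hje : Even j := by
      by_contra hodd
      have hv : ξ (j + 1) = ξ j := (hΔξ j hj).2 hodd
      have : x = ξ j := by rw [h1, hv]; ring
      exact hA (Or.inr (Or.inr ⟨j, hj, hv, this⟩))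
    have hΔpos : 0 < ξ (j + 1) - ξ j := by linarith [(hΔξ j hj).1 hje]
    have hΔηnn : 0 ≤ η (j + 1) - η j := by linarith [(hΔη j hj).1 hje]
    have ht0' : 0 < t := by
      rcases lt_or_eq_of_le ht0 with h | h
      · exact h
      · exfalso
        have hxj : x = ξ j := by rw [h1, ← h]; ring
        rcases Nat.eq_zero_or_pos j with hj0 | hj0
        · exact hA (Or.inl (by rw [hxj, hj0]))
        · have hjm1 : ¬ Even (j - 1) := by simp [Nat.even_iff] at hje ⊢; omega
          have hveq : ξ (j - 1 + 1) = ξ (j - 1) := (hΔξ (j - 1) (by omega)).2 hjm1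
          have hj1 : j - 1 + 1 = j := by omega
          exact hA (Or.inr (Or.inr ⟨j - 1, by omega, hveq, by rw [hxj]; rw [← hveq]; congr 1; omega⟩))
    have ht1' : t < 1 := by
      rcases lt_or_eq_of_le ht1 with h | h
      · exact h
      · exfalso
        have hxj : x = ξ (j + 1) := by rw [h1, h]; ring
        rcases Nat.lt_or_ge (j + 1) (2 * m - 1) with hlt | hge
        · have hjodd : ¬ Even (j + 1) := by simp [Nat.even_iff] at hje ⊢; omega
          have hveq : ξ (j + 1 + 1) = ξ (j + 1) := (hΔξ (j + 1) hlt).2 hjodd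
          exact hA (Or.inr (Or.inr ⟨j + 1, hlt, hveq, hxj⟩))
        · have : j + 1 = 2 * m - 1 := by omega
          exact hA (Or.inr (Or.inl (by rw [hxj, this])))
    have hx1 : ξ j < x := by rw [h1]; nlinarith
    have hx2 : x < ξ (j + 1) := by rw [h1]; nlinarith
    have hG : G = (η (j + 1) - η j) / ((ξ (j + 1) - ξ j) + (η (j + 1) - η j)) :=
      hG2 j hj hje ⟨hx1.le, hx2.le⟩ hA
    constructor
    · rw [hG]
      constructor
      · exact div_nonneg (by linarith) (by linarith)
      · rw [div_le_one (by linarith)]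
        linarith
    · intro v
      show (G * v, -((1 - G) * v)) ∈ gphLimitingNormal (polyPhi m ξ η) x xstar
      exact limiting_of_seq _ _ _ _ (fun _ => xstar) (fun _ => hxm)
        (fun _ => frechet_sloped m ξ η hΔξ hΔη v j hj hje x xstar t G hG h1 h2 hx1 hx2)
        tendsto_const_nhds
end
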